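/- arXiv:1707.00775 — 8 statements merged into one kernel-verified Lean document; each statement's English description precedes it below -/
import Mathlib

section
/- Let λ ≠ 0 and let ω, ω̃ : ℝ² → ℝ be twice continuously differentiable functions satisfying the Bäcklund transformation system with parameter λ. Then both ω and ω̃ satisfy the sine-Gordon equation: ω_ξη = sin ω and ω̃_ξη = sin ω̃. -/
/-- First partial derivative (w.r.t. the first variable) of a curried function of two
real variables. -/
noncomputable def pd1 (f : ℝ → ℝ → ℝ) (x y : ℝ) : ℝ := deriv (fun x' => f x' y) x

/-- Second partial derivative (w.r.t. the second variable). -/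
noncomputable def pd2 (f : ℝ → ℝ → ℝ) (x y : ℝ) : ℝ := deriv (fun y' => f x y') y

/-- The pair `(ω, ω̃)` satisfies the Bäcklund transformation system for the sine-Gordon
equation with parameter `λ`:
`((ω̃ − ω)/2)_ξ = λ sin((ω̃ + ω)/2)` and `((ω̃ + ω)/2)_η = (1/λ) sin((ω̃ − ω)/2)`. -/
def IsBacklund (lam : ℝ) (ω ω' : ℝ → ℝ → ℝ) : Prop :=
  (∀ ξ η : ℝ, pd1 (fun ξ η => (ω' ξ η - ω ξ η) / 2) ξ η
      = lam * Real.sin ((ω' ξ η + ω ξ η) / 2)) ∧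
  (∀ ξ η : ℝ, pd2 (fun ξ η => (ω' ξ η + ω ξ η) / 2) ξ η
      = (1 / lam) * Real.sin ((ω' ξ η - ω ξ η) / 2))

private lemma key1 {F : ℝ × ℝ → ℝ} (hF : Differentiable ℝ F) (x y : ℝ) :
    HasDerivAt (fun x' => F (x', y)) (fderiv ℝ F (x, y) (1, 0)) x := by
  have h := (hF (x, y)).hasFDerivAt.comp_hasDerivAt x
    ((hasDerivAt_id x).prodMk (hasDerivAt_const x y))
  simp [Function.comp] at h; exact h

private lemma key2 {F : ℝ × ℝ → ℝ} (hF : Differentiable ℝ F) (x y : ℝ) :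
    HasDerivAt (fun y' => F (x, y')) (fderiv ℝ F (x, y) (0, 1)) y := by
  have h := (hF (x, y)).hasFDerivAt.comp_hasDerivAt y
    ((hasDerivAt_const y x).prodMk (hasDerivAt_id y))
  exact h

private lemma pd_swap (f : ℝ → ℝ → ℝ) (hf : ContDiff ℝ 2 fun p : ℝ × ℝ => f p.1 p.2)
    (x y : ℝ) : pd2 (pd1 f) x y = pd1 (pd2 f) x y := by
  have hFd : Differentiable ℝ (fun p : ℝ × ℝ => f p.1 p.2) := hf.differentiable two_ne_zero
  have hF' : Differentiable ℝ (fderiv ℝ (fun p : ℝ × ℝ => f p.1 p.2)) :=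
    (hf.fderiv_right (m := 1) (by norm_num)).differentiable one_ne_zero
  set F : ℝ × ℝ → ℝ := fun p => f p.1 p.2
  have h2 : ∀ p : ℝ × ℝ, HasFDerivAt (fderiv ℝ F) (fderiv ℝ (fderiv ℝ F) p) p :=
    fun p => (hF' p).hasFDerivAt
  have hsymm := second_derivative_symmetric (fun p => (hFd p).hasFDerivAt) (h2 (x, y))
      (((0:ℝ),(1:ℝ))) (((1:ℝ),(0:ℝ)))
  have hL : pd2 (pd1 f) x y = fderiv ℝ (fderiv ℝ F) (x, y) (0, 1) (1, 0) := by
    have hfun : (fun y' => pd1 f x y') = fun y' => fderiv ℝ F (x, y') (1, 0) :=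
      funext fun y' => (key1 hFd x y').deriv
    have hA : HasDerivAt (fun y' => fderiv ℝ F (x, y') (1, 0))
        (fderiv ℝ (fderiv ℝ F) (x, y) (0, 1) (1, 0)) y := by
      have hc := ((ContinuousLinearMap.apply ℝ ℝ (((1:ℝ),(0:ℝ)))).hasFDerivAt.comp (x, y)
        (h2 (x, y))).comp_hasDerivAt y ((hasDerivAt_const y x).prodMk (hasDerivAt_id y))
      simp [Function.comp] at hc; exact hc
    show deriv (fun y' => pd1 f x y') y = _
    rw [hfun]; exact hA.deriv
  have hR : pd1 (pd2 f) x y = fderiv ℝ (fderiv ℝ F) (x, y) (1, 0) (0, 1) := by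
    have hfun : (fun x' => pd2 f x' y) = fun x' => fderiv ℝ F (x', y) (0, 1) :=
      funext fun x' => (key2 hFd x' y).deriv
    have hA : HasDerivAt (fun x' => fderiv ℝ F (x', y) (0, 1))
        (fderiv ℝ (fderiv ℝ F) (x, y) (1, 0) (0, 1)) x := by
      have hc := ((ContinuousLinearMap.apply ℝ ℝ (((0:ℝ),(1:ℝ)))).hasFDerivAt.comp (x, y)
        (h2 (x, y))).comp_hasDerivAt x ((hasDerivAt_id x).prodMk (hasDerivAt_const x y))
      simp [Function.comp] at hc; exact hc
    show deriv (fun x' => pd2 f x' y) x = _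
    rw [hfun]; exact hA.deriv
  rw [hL, hR, hsymm]

/-- If `(ω, ω̃)` satisfies the Bäcklund transformation system with parameter `λ ≠ 0`,
then both `ω` and `ω̃` satisfy the sine-Gordon equation `ω_ξη = sin ω`. -/
theorem backlund_implies_sineGordon (lam : ℝ) (hlam : lam ≠ 0)
    (ω ω' : ℝ → ℝ → ℝ)
    (hω : ContDiff ℝ 2 fun p : ℝ × ℝ => ω p.1 p.2)
    (hω' : ContDiff ℝ 2 fun p : ℝ × ℝ => ω' p.1 p.2)
    (hB : IsBacklund lam ω ω') :
    (∀ ξ η : ℝ, pd2 (pd1 ω) ξ η = Real.sin (ω ξ η)) ∧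
    (∀ ξ η : ℝ, pd2 (pd1 ω') ξ η = Real.sin (ω' ξ η)) := by
  obtain ⟨hB1, hB2⟩ := hB
  set u : ℝ → ℝ → ℝ := fun a b => (ω' a b - ω a b) / 2 with hu_def
  set v : ℝ → ℝ → ℝ := fun a b => (ω' a b + ω a b) / 2 with hv_def
  have hU2 : ContDiff ℝ 2 (fun p : ℝ × ℝ => u p.1 p.2) := (hω'.sub hω).div_const 2
  have hV2 : ContDiff ℝ 2 (fun p : ℝ × ℝ => v p.1 p.2) := (hω'.add hω).div_const 2
  have hUd : Differentiable ℝ (fun p : ℝ × ℝ => u p.1 p.2) := hU2.differentiable two_ne_zero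
  have hVd : Differentiable ℝ (fun p : ℝ × ℝ => v p.1 p.2) := hV2.differentiable two_ne_zero
  have B1 : ∀ ξ η : ℝ, pd1 u ξ η = lam * Real.sin (v ξ η) := hB1
  have B2 : ∀ ξ η : ℝ, pd2 v ξ η = (1 / lam) * Real.sin (u ξ η) := hB2
  have hd1u : ∀ ξ η, HasDerivAt (fun x => u x η) (pd1 u ξ η) ξ :=
    fun ξ η => (key1 hUd ξ η).differentiableAt.hasDerivAt
  have hd1v : ∀ ξ η, HasDerivAt (fun x => v x η) (pd1 v ξ η) ξ :=
    fun ξ η => (key1 hVd ξ η).differentiableAt.hasDerivAt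
  have hd2v : ∀ ξ η, HasDerivAt (fun y => v ξ y) (pd2 v ξ η) η :=
    fun ξ η => (key2 hVd ξ η).differentiableAt.hasDerivAt
  -- mixed partial of u
  have Hu : ∀ ξ η, pd2 (pd1 u) ξ η = Real.cos (v ξ η) * Real.sin (u ξ η) := by
    intro ξ η
    have hfun : (fun y => pd1 u ξ y) = fun y => lam * Real.sin (v ξ y) :=
      funext fun y => B1 ξ y
    show deriv (fun y => pd1 u ξ y) η = _
    rw [hfun, (((hd2v ξ η).sin).const_mul lam).deriv, B2 ξ η]
    field_simp
  -- mixed partial of v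
  have Hv : ∀ ξ η, pd2 (pd1 v) ξ η = Real.cos (u ξ η) * Real.sin (v ξ η) := by
    intro ξ η
    rw [pd_swap v hV2 ξ η]
    have hfun : (fun x => pd2 v x η) = fun x => (1 / lam) * Real.sin (u x η) :=
      funext fun x => B2 x η
    show deriv (fun x => pd2 v x η) ξ = _
    rw [hfun, (((hd1u ξ η).sin).const_mul (1 / lam)).deriv, B1 ξ η]
    field_simp
  -- differentiability of the first partials in the second variable
  have hduu : ∀ ξ η, HasDerivAt (fun y => pd1 u ξ y) (pd2 (pd1 u) ξ η) η := by
    intro ξ η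
    have hfun : (fun y => pd1 u ξ y) = fun y => lam * Real.sin (v ξ y) :=
      funext fun y => B1 ξ y
    have hdiff : DifferentiableAt ℝ (fun y => pd1 u ξ y) η := by
      rw [hfun]; exact (((hd2v ξ η).sin).const_mul lam).differentiableAt
    exact hdiff.hasDerivAt
  have hdvv : ∀ ξ η, HasDerivAt (fun y => pd1 v ξ y) (pd2 (pd1 v) ξ η) η := by
    intro ξ η
    have hV' : Differentiable ℝ (fderiv ℝ (fun p : ℝ × ℝ => v p.1 p.2)) :=
      (hV2.fderiv_right (m := 1) (by norm_num)).differentiable one_ne_zero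
    have hA : Differentiable ℝ (fun p : ℝ × ℝ => fderiv ℝ (fun p : ℝ × ℝ => v p.1 p.2) p (1, 0)) :=
      ((ContinuousLinearMap.apply ℝ ℝ (((1:ℝ),(0:ℝ)))).differentiable).comp hV'
    have hfun : (fun y => pd1 v ξ y)
        = fun y => fderiv ℝ (fun p : ℝ × ℝ => v p.1 p.2) (ξ, y) (1, 0) :=
      funext fun y => (key1 hVd ξ y).deriv
    have hdiff : DifferentiableAt ℝ (fun y => pd1 v ξ y) η := by
      rw [hfun]
      exact (hA.comp ((differentiable_const ξ).prodMk differentiable_id)).differentiableAt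
    exact hdiff.hasDerivAt
  constructor
  · intro ξ η
    have hfun : (fun y => pd1 ω ξ y) = fun y => pd1 v ξ y - pd1 u ξ y := by
      funext y
      have h := (hd1v ξ y).fun_sub (hd1u ξ y)
      have h2 : (fun x => v x y - u x y) = fun x => ω x y := by
        funext x; simp [hu_def, hv_def]; ring
      rw [h2] at h
      exact h.deriv
    have hcalc : pd2 (pd1 ω) ξ η = pd2 (pd1 v) ξ η - pd2 (pd1 u) ξ η := by
      show deriv (fun y => pd1 ω ξ y) η = _
      rw [hfun]
      exact ((hdvv ξ η).sub (hduu ξ η)).deriv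
    have homega : ω ξ η = v ξ η - u ξ η := by simp [hu_def, hv_def]; ring
    rw [hcalc, Hv ξ η, Hu ξ η, homega, Real.sin_sub]
    ring
  · intro ξ η
    have hfun : (fun y => pd1 ω' ξ y) = fun y => pd1 v ξ y + pd1 u ξ y := by
      funext y
      have h := (hd1v ξ y).fun_add (hd1u ξ y)
      have h2 : (fun x => v x y + u x y) = fun x => ω' x y := by
        funext x; simp [hu_def, hv_def]; ring
      rw [h2] at h
      exact h.deriv
    have hcalc : pd2 (pd1 ω') ξ η = pd2 (pd1 v) ξ η + pd2 (pd1 u) ξ η := by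
      show deriv (fun y => pd1 ω' ξ y) η = _
      rw [hfun]
      exact ((hdvv ξ η).add (hduu ξ η)).deriv
    have homega : ω' ξ η = v ξ η + u ξ η := by simp [hu_def, hv_def]; ring
    rw [hcalc, Hv ξ η, Hu ξ η, homega, Real.sin_add]
    ring
end

section
/- (Bianchi permutability / nonlinear superposition formula.) Let λ₁, λ₂ be nonzero reals with λ₁ ≠ λ₂ and λ₁ ≠ −λ₂, and let ω, ω¹, ω² : ℝ² → ℝ be differentiable functions such that (ω, ω¹) satisfies the Bäcklund transformation system with parameter λ₁ and (ω, ω²) satisfies it with parameter λ₂. Assume cos((ω¹ − ω²)/4) ≠ 0 everywhere, and define ω¹² := ω + 4 arctan[ ((λ₁ + λ₂)/(λ₁ − λ₂)) tan((ω¹ − ω²)/4) ], so that tan((ω¹² − ω)/4) = ((λ₁ + λ₂)/(λ₁ − λ₂)) tan((ω¹ − ω²)/4). Then the pair (ω¹, ω¹²) satisfies the Bäcklund transformation system with parameter λ₂. -/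
lemma bp_slice1 {f : ℝ → ℝ → ℝ} (hf : Differentiable ℝ fun p : ℝ × ℝ => f p.1 p.2)
    (x y : ℝ) : HasDerivAt (fun x' => f x' y) (deriv (fun x' => f x' y) x) x := by
  have h : DifferentiableAt ℝ (fun x' : ℝ => f x' y) x :=
    by have := (hf (x, y)).comp x ((differentiableAt_id (𝕜 := ℝ) (x := x)).prodMk (differentiableAt_const y)); exact this
  exact h.hasDerivAt

lemma bp_slice2 {f : ℝ → ℝ → ℝ} (hf : Differentiable ℝ fun p : ℝ × ℝ => f p.1 p.2)
    (x y : ℝ) : HasDerivAt (fun y' => f x y') (deriv (fun y' => f x y') y) y := by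
  have h : DifferentiableAt ℝ (fun y' : ℝ => f x y') y :=
    (hf (x, y)).comp y ((differentiableAt_const x).prodMk differentiableAt_id)
  exact h.hasDerivAt

lemma bp_sin_two_arctan (x : ℝ) :
    Real.sin (2 * Real.arctan x) = 2 * x / (1 + x ^ 2) := by
  rw [Real.sin_two_mul, Real.sin_arctan, Real.cos_arctan]
  have h : Real.sqrt (1 + x ^ 2) ^ 2 = 1 + x ^ 2 := Real.sq_sqrt (by positivity)
  have h0 : Real.sqrt (1 + x ^ 2) ≠ 0 := by positivity
  field_simp
  rw [h]

lemma bp_cos_two_arctan (x : ℝ) :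
    Real.cos (2 * Real.arctan x) = (1 - x ^ 2) / (1 + x ^ 2) := by
  rw [Real.cos_two_mul, Real.cos_arctan]
  have h : Real.sqrt (1 + x ^ 2) ^ 2 = 1 + x ^ 2 := Real.sq_sqrt (by positivity)
  have h0 : Real.sqrt (1 + x ^ 2) ≠ 0 := by positivity
  have h1 : (1:ℝ) + x ^ 2 ≠ 0 := by positivity
  field_simp
  rw [h]
  ring

lemma bp_alg1 (lam1 lam2 sA cA s c : ℝ) (hd : lam1 - lam2 ≠ 0) (hc : c ≠ 0)
    (hpy : s ^ 2 + c ^ 2 = 1) :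
    2 * (1 / (1 + ((lam1 + lam2) / (lam1 - lam2) * (s / c)) ^ 2) *
      ((lam1 + lam2) / (lam1 - lam2) / c ^ 2 *
        ((lam1 * sA - lam2 * (sA * (c ^ 2 - s ^ 2) - cA * (2 * s * c))) / 2)))
      - lam1 * sA
    = lam2 * (sA * ((1 - ((lam1 + lam2) / (lam1 - lam2) * (s / c)) ^ 2) /
        (1 + ((lam1 + lam2) / (lam1 - lam2) * (s / c)) ^ 2))
      + cA * (2 * ((lam1 + lam2) / (lam1 - lam2) * (s / c)) /
        (1 + ((lam1 + lam2) / (lam1 - lam2) * (s / c)) ^ 2))) := by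
  have hden : (1 : ℝ) + ((lam1 + lam2) / (lam1 - lam2) * (s / c)) ^ 2 ≠ 0 := by positivity
  field_simp
  linear_combination (-lam1*(lam1^2-lam2^2)*sA) * hpy

lemma bp_alg2 (lam1 lam2 sA cA s c : ℝ) (h1 : lam1 ≠ 0) (h2 : lam2 ≠ 0)
    (hd : lam1 - lam2 ≠ 0) (hc : c ≠ 0) (hpy : s ^ 2 + c ^ 2 = 1) :
    2 * (1 / (1 + ((lam1 + lam2) / (lam1 - lam2) * (s / c)) ^ 2) *
      ((lam1 + lam2) / (lam1 - lam2) / c ^ 2 *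
        ((1 / lam1 * sA - 1 / lam2 * (sA * (c ^ 2 - s ^ 2) - cA * (2 * s * c))) / 2)))
      + 1 / lam1 * sA
    = 1 / lam2 * (cA * (2 * ((lam1 + lam2) / (lam1 - lam2) * (s / c)) /
        (1 + ((lam1 + lam2) / (lam1 - lam2) * (s / c)) ^ 2))
      - sA * ((1 - ((lam1 + lam2) / (lam1 - lam2) * (s / c)) ^ 2) /
        (1 + ((lam1 + lam2) / (lam1 - lam2) * (s / c)) ^ 2))) := by
  have hden : (1 : ℝ) + ((lam1 + lam2) / (lam1 - lam2) * (s / c)) ^ 2 ≠ 0 := by positivity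
  field_simp
  linear_combination (-lam2*(lam1^2-lam2^2)*sA) * hpy

/-- Bianchi permutability / nonlinear superposition formula for the sine-Gordon
Bäcklund transformation: `ω¹² := ω + 4 arctan[((λ₁+λ₂)/(λ₁−λ₂)) tan((ω¹−ω²)/4)]`
satisfies `tan((ω¹² − ω)/4) = ((λ₁+λ₂)/(λ₁−λ₂)) tan((ω¹−ω²)/4)`, and the pair
`(ω¹, ω¹²)` satisfies the Bäcklund system with parameter `λ₂`. -/
theorem bianchi_permutability (lam1 lam2 : ℝ)
    (h1 : lam1 ≠ 0) (h2 : lam2 ≠ 0) (h12 : lam1 ≠ lam2) (h12' : lam1 ≠ -lam2)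
    (ω ω1 ω2 : ℝ → ℝ → ℝ)
    (hω : Differentiable ℝ fun p : ℝ × ℝ => ω p.1 p.2)
    (hω1 : Differentiable ℝ fun p : ℝ × ℝ => ω1 p.1 p.2)
    (hω2 : Differentiable ℝ fun p : ℝ × ℝ => ω2 p.1 p.2)
    (hB1 : IsBacklund lam1 ω ω1)
    (hB2 : IsBacklund lam2 ω ω2)
    (hcos : ∀ ξ η : ℝ, Real.cos ((ω1 ξ η - ω2 ξ η) / 4) ≠ 0)
    (ω12 : ℝ → ℝ → ℝ)
    (hω12 : ∀ ξ η : ℝ, ω12 ξ η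
      = ω ξ η + 4 * Real.arctan (((lam1 + lam2) / (lam1 - lam2))
          * Real.tan ((ω1 ξ η - ω2 ξ η) / 4))) :
    (∀ ξ η : ℝ, Real.tan ((ω12 ξ η - ω ξ η) / 4)
      = ((lam1 + lam2) / (lam1 - lam2)) * Real.tan ((ω1 ξ η - ω2 ξ η) / 4)) ∧
    IsBacklund lam2 ω1 ω12 := by
  have hd : lam1 - lam2 ≠ 0 := sub_ne_zero.mpr h12
  refine ⟨?_, ?_, ?_⟩
  · intro ξ η
    rw [hω12 ξ η,
      show (ω ξ η + 4 * Real.arctan ((lam1 + lam2) / (lam1 - lam2)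
          * Real.tan ((ω1 ξ η - ω2 ξ η) / 4)) - ω ξ η) / 4
        = Real.arctan ((lam1 + lam2) / (lam1 - lam2)
          * Real.tan ((ω1 ξ η - ω2 ξ η) / 4)) from by ring,
      Real.tan_arctan]
  · -- ξ equation
    intro ξ η
    have Hω := bp_slice1 hω ξ η
    have Hω1 := bp_slice1 hω1 ξ η
    have Hω2 := bp_slice1 hω2 ξ η
    set p := deriv (fun x' => ω x' η) ξ with hp
    set p1 := deriv (fun x' => ω1 x' η) ξ with hp1d
    set p2 := deriv (fun x' => ω2 x' η) ξ with hp2d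
    have e1 : (p1 - p) / 2 = lam1 * Real.sin ((ω1 ξ η + ω ξ η) / 2) := by
      have h := hB1.1 ξ η
      simp only [pd1] at h
      rw [← h]
      exact ((Hω1.sub Hω).div_const 2).deriv.symm
    have e2 : (p2 - p) / 2 = lam2 * Real.sin ((ω2 ξ η + ω ξ η) / 2) := by
      have h := hB2.1 ξ η
      simp only [pd1] at h
      rw [← h]
      exact ((Hω2.sub Hω).div_const 2).deriv.symm
    have Hθ : HasDerivAt (fun x => (ω1 x η - ω2 x η) / 4) ((p1 - p2) / 4) ξ :=
      (Hω1.sub Hω2).div_const 4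
    have Htan : HasDerivAt (fun x => Real.tan ((ω1 x η - ω2 x η) / 4))
        (1 / Real.cos ((ω1 ξ η - ω2 ξ η) / 4) ^ 2 * ((p1 - p2) / 4)) ξ :=
      by have := (Real.hasDerivAt_tan (hcos ξ η)).comp ξ Hθ; exact this
    have Hkt := Htan.const_mul ((lam1 + lam2) / (lam1 - lam2))
    have Har : HasDerivAt
        (fun x => Real.arctan ((lam1 + lam2) / (lam1 - lam2)
          * Real.tan ((ω1 x η - ω2 x η) / 4)))
        (1 / (1 + ((lam1 + lam2) / (lam1 - lam2)
            * Real.tan ((ω1 ξ η - ω2 ξ η) / 4)) ^ 2)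
          * ((lam1 + lam2) / (lam1 - lam2)
            * (1 / Real.cos ((ω1 ξ η - ω2 ξ η) / 4) ^ 2 * ((p1 - p2) / 4)))) ξ :=
      (Real.hasDerivAt_arctan _).comp ξ Hkt
    have H12 : HasDerivAt (fun x => ω12 x η)
        (p + 4 * (1 / (1 + ((lam1 + lam2) / (lam1 - lam2)
            * Real.tan ((ω1 ξ η - ω2 ξ η) / 4)) ^ 2)
          * ((lam1 + lam2) / (lam1 - lam2)
            * (1 / Real.cos ((ω1 ξ η - ω2 ξ η) / 4) ^ 2 * ((p1 - p2) / 4))))) ξ :=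
      (Hω.add (Har.const_mul 4)).congr_of_eventuallyEq
        (Filter.Eventually.of_forall fun x => hω12 x η)
    have LHSeq : pd1 (fun ξ η => (ω12 ξ η - ω1 ξ η) / 2) ξ η
        = ((p + 4 * (1 / (1 + ((lam1 + lam2) / (lam1 - lam2)
            * Real.tan ((ω1 ξ η - ω2 ξ η) / 4)) ^ 2)
          * ((lam1 + lam2) / (lam1 - lam2)
            * (1 / Real.cos ((ω1 ξ η - ω2 ξ η) / 4) ^ 2 * ((p1 - p2) / 4))))) - p1) / 2 := by
      simp only [pd1]
      exact ((H12.sub Hω1).div_const 2).deriv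
    have hpy := Real.sin_sq_add_cos_sq ((ω1 ξ η - ω2 ξ η) / 4)
    have hsB : Real.sin ((ω2 ξ η + ω ξ η) / 2)
        = Real.sin ((ω1 ξ η + ω ξ η) / 2)
            * (Real.cos ((ω1 ξ η - ω2 ξ η) / 4) ^ 2
              - Real.sin ((ω1 ξ η - ω2 ξ η) / 4) ^ 2)
          - Real.cos ((ω1 ξ η + ω ξ η) / 2)
            * (2 * Real.sin ((ω1 ξ η - ω2 ξ η) / 4)
              * Real.cos ((ω1 ξ η - ω2 ξ η) / 4)) := by
      rw [show (ω2 ξ η + ω ξ η) / 2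
          = (ω1 ξ η + ω ξ η) / 2 - 2 * ((ω1 ξ η - ω2 ξ η) / 4) from by ring,
        Real.sin_sub, Real.sin_two_mul, Real.cos_two_mul]
      linear_combination Real.sin ((ω1 ξ η + ω ξ η) / 2) * hpy
    have hq1 : p1 = p + 2 * (lam1 * Real.sin ((ω1 ξ η + ω ξ η) / 2)) := by linarith
    have hq2 : p2 = p + 2 * (lam2 * Real.sin ((ω2 ξ η + ω ξ η) / 2)) := by linarith
    rw [LHSeq, hω12 ξ η,
      show (ω ξ η + 4 * Real.arctan ((lam1 + lam2) / (lam1 - lam2)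
          * Real.tan ((ω1 ξ η - ω2 ξ η) / 4)) + ω1 ξ η) / 2
        = 2 * Real.arctan ((lam1 + lam2) / (lam1 - lam2)
            * Real.tan ((ω1 ξ η - ω2 ξ η) / 4)) + (ω1 ξ η + ω ξ η) / 2 from by ring,
      Real.sin_add, bp_sin_two_arctan, bp_cos_two_arctan, Real.tan_eq_sin_div_cos,
      hq1, hq2, hsB]
    linear_combination bp_alg1 lam1 lam2 (Real.sin ((ω1 ξ η + ω ξ η) / 2))
      (Real.cos ((ω1 ξ η + ω ξ η) / 2)) (Real.sin ((ω1 ξ η - ω2 ξ η) / 4))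
      (Real.cos ((ω1 ξ η - ω2 ξ η) / 4)) hd (hcos ξ η) hpy
  · -- η equation
    intro ξ η
    have Hω := bp_slice2 hω ξ η
    have Hω1 := bp_slice2 hω1 ξ η
    have Hω2 := bp_slice2 hω2 ξ η
    set p := deriv (fun y' => ω ξ y') η with hp
    set p1 := deriv (fun y' => ω1 ξ y') η with hp1d
    set p2 := deriv (fun y' => ω2 ξ y') η with hp2d
    have e1 : (p1 + p) / 2 = (1 / lam1) * Real.sin ((ω1 ξ η - ω ξ η) / 2) := by
      have h := hB1.2 ξ η
      simp only [pd2] at h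
      rw [← h]
      exact ((Hω1.add Hω).div_const 2).deriv.symm
    have e2 : (p2 + p) / 2 = (1 / lam2) * Real.sin ((ω2 ξ η - ω ξ η) / 2) := by
      have h := hB2.2 ξ η
      simp only [pd2] at h
      rw [← h]
      exact ((Hω2.add Hω).div_const 2).deriv.symm
    have Hθ : HasDerivAt (fun y => (ω1 ξ y - ω2 ξ y) / 4) ((p1 - p2) / 4) η :=
      (Hω1.sub Hω2).div_const 4
    have Htan : HasDerivAt (fun y => Real.tan ((ω1 ξ y - ω2 ξ y) / 4))
        (1 / Real.cos ((ω1 ξ η - ω2 ξ η) / 4) ^ 2 * ((p1 - p2) / 4)) η :=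
      by have := (Real.hasDerivAt_tan (hcos ξ η)).comp η Hθ; exact this
    have Hkt := Htan.const_mul ((lam1 + lam2) / (lam1 - lam2))
    have Har : HasDerivAt
        (fun y => Real.arctan ((lam1 + lam2) / (lam1 - lam2)
          * Real.tan ((ω1 ξ y - ω2 ξ y) / 4)))
        (1 / (1 + ((lam1 + lam2) / (lam1 - lam2)
            * Real.tan ((ω1 ξ η - ω2 ξ η) / 4)) ^ 2)
          * ((lam1 + lam2) / (lam1 - lam2)
            * (1 / Real.cos ((ω1 ξ η - ω2 ξ η) / 4) ^ 2 * ((p1 - p2) / 4)))) η :=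
      (Real.hasDerivAt_arctan _).comp η Hkt
    have H12 : HasDerivAt (fun y => ω12 ξ y)
        (p + 4 * (1 / (1 + ((lam1 + lam2) / (lam1 - lam2)
            * Real.tan ((ω1 ξ η - ω2 ξ η) / 4)) ^ 2)
          * ((lam1 + lam2) / (lam1 - lam2)
            * (1 / Real.cos ((ω1 ξ η - ω2 ξ η) / 4) ^ 2 * ((p1 - p2) / 4))))) η :=
      (Hω.add (Har.const_mul 4)).congr_of_eventuallyEq
        (Filter.Eventually.of_forall fun y => hω12 ξ y)
    have LHSeq : pd2 (fun ξ η => (ω12 ξ η + ω1 ξ η) / 2) ξ η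
        = ((p + 4 * (1 / (1 + ((lam1 + lam2) / (lam1 - lam2)
            * Real.tan ((ω1 ξ η - ω2 ξ η) / 4)) ^ 2)
          * ((lam1 + lam2) / (lam1 - lam2)
            * (1 / Real.cos ((ω1 ξ η - ω2 ξ η) / 4) ^ 2 * ((p1 - p2) / 4))))) + p1) / 2 := by
      simp only [pd2]
      exact ((H12.add Hω1).div_const 2).deriv
    have hpy := Real.sin_sq_add_cos_sq ((ω1 ξ η - ω2 ξ η) / 4)
    have hsB : Real.sin ((ω2 ξ η - ω ξ η) / 2)
        = Real.sin ((ω1 ξ η - ω ξ η) / 2)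
            * (Real.cos ((ω1 ξ η - ω2 ξ η) / 4) ^ 2
              - Real.sin ((ω1 ξ η - ω2 ξ η) / 4) ^ 2)
          - Real.cos ((ω1 ξ η - ω ξ η) / 2)
            * (2 * Real.sin ((ω1 ξ η - ω2 ξ η) / 4)
              * Real.cos ((ω1 ξ η - ω2 ξ η) / 4)) := by
      rw [show (ω2 ξ η - ω ξ η) / 2
          = (ω1 ξ η - ω ξ η) / 2 - 2 * ((ω1 ξ η - ω2 ξ η) / 4) from by ring,
        Real.sin_sub, Real.sin_two_mul, Real.cos_two_mul]
      linear_combination Real.sin ((ω1 ξ η - ω ξ η) / 2) * hpy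
    have hq1 : p1 = -p + 2 * ((1 / lam1) * Real.sin ((ω1 ξ η - ω ξ η) / 2)) := by linarith
    have hq2 : p2 = -p + 2 * ((1 / lam2) * Real.sin ((ω2 ξ η - ω ξ η) / 2)) := by linarith
    rw [LHSeq, hω12 ξ η,
      show (ω ξ η + 4 * Real.arctan ((lam1 + lam2) / (lam1 - lam2)
          * Real.tan ((ω1 ξ η - ω2 ξ η) / 4)) - ω1 ξ η) / 2
        = 2 * Real.arctan ((lam1 + lam2) / (lam1 - lam2)
            * Real.tan ((ω1 ξ η - ω2 ξ η) / 4)) - (ω1 ξ η - ω ξ η) / 2 from by ring,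
      Real.sin_sub, bp_sin_two_arctan, bp_cos_two_arctan, Real.tan_eq_sin_div_cos,
      hq1, hq2, hsB]
    linear_combination bp_alg2 lam1 lam2 (Real.sin ((ω1 ξ η - ω ξ η) / 2))
      (Real.cos ((ω1 ξ η - ω ξ η) / 2)) (Real.sin ((ω1 ξ η - ω2 ξ η) / 4))
      (Real.cos ((ω1 ξ η - ω2 ξ η) / 4)) h1 h2 hd (hcos ξ η) hpy
end

section
/- Let k > 0 and define w(α) := 4 arctan(exp(α/√k)). Then w satisfies the ordinary differential equation k·w''(α) = sin w(α) for all α ∈ ℝ, together with the first-integral relation k·(w'(α))² = 2 − 2 cos w(α) (i.e. the integration constant is l = 1). -/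
lemma sin_four_arctan (t : ℝ) :
    Real.sin (4 * Real.arctan t) = 4 * t * (1 - t ^ 2) / (1 + t ^ 2) ^ 2 := by
  have h4 : (4:ℝ) * Real.arctan t = 2 * (2 * Real.arctan t) := by ring
  have hs : Real.sqrt (1 + t ^ 2) ^ 2 = 1 + t ^ 2 := Real.sq_sqrt (by positivity)
  have hne : Real.sqrt (1 + t ^ 2) ≠ 0 := by positivity
  rw [h4, Real.sin_two_mul, Real.sin_two_mul, Real.cos_two_mul,
      Real.sin_arctan, Real.cos_arctan]
  rw [div_pow, one_div] at *
  field_simp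
  rw [show Real.sqrt (1 + t ^ 2) ^ 4 = (Real.sqrt (1 + t ^ 2) ^ 2) ^ 2 by ring, hs]
  ring

lemma cos_four_arctan (t : ℝ) :
    Real.cos (4 * Real.arctan t) = (2 * (1 - t ^ 2) ^ 2 - (1 + t ^ 2) ^ 2) / (1 + t ^ 2) ^ 2 := by
  have h4 : (4:ℝ) * Real.arctan t = 2 * (2 * Real.arctan t) := by ring
  have hs : Real.sqrt (1 + t ^ 2) ^ 2 = 1 + t ^ 2 := Real.sq_sqrt (by positivity)
  have hne : Real.sqrt (1 + t ^ 2) ≠ 0 := by positivity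
  rw [h4, Real.cos_two_mul, Real.cos_two_mul, Real.cos_arctan]
  field_simp
  rw [show Real.sqrt (1 + t ^ 2) ^ 4 = (Real.sqrt (1 + t ^ 2) ^ 2) ^ 2 by ring, hs]
  ring

/-- The one-soliton profile `w(α) = 4 arctan(exp(α/√k))` (`k > 0`) satisfies
`k·w'' = sin w` together with the first integral `k·(w')² = 2 − 2 cos w`
(integration constant `l = 1`). -/
theorem one_soliton_profile (k : ℝ) (hk : 0 < k) :
    ∀ α : ℝ,
      k * deriv (deriv (fun α => 4 * Real.arctan (Real.exp (α / Real.sqrt k)))) α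
        = Real.sin (4 * Real.arctan (Real.exp (α / Real.sqrt k))) ∧
      k * (deriv (fun α => 4 * Real.arctan (Real.exp (α / Real.sqrt k))) α) ^ 2
        = 2 - 2 * Real.cos (4 * Real.arctan (Real.exp (α / Real.sqrt k))) := by
  set s := Real.sqrt k with hsdef
  have hs : 0 < s := Real.sqrt_pos.mpr hk
  have hk' : s ^ 2 = k := Real.sq_sqrt hk.le
  have hg : ∀ x : ℝ, HasDerivAt (fun α : ℝ => Real.exp (α / s)) (Real.exp (x / s) / s) x := by
    intro x
    have h1 : HasDerivAt (fun α : ℝ => α / s) (1 / s) x := by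
      simpa using (hasDerivAt_id x).div_const s
    simpa [div_eq_mul_inv, mul_comm, Function.comp_def] using (Real.hasDerivAt_exp (x / s)).comp x h1
  have hd1 : ∀ x : ℝ, HasDerivAt (fun α => 4 * Real.arctan (Real.exp (α / s)))
      (4 * (Real.exp (x / s) / ((1 + Real.exp (x / s) ^ 2) * s))) x := by
    intro x
    have h2 := (Real.hasDerivAt_arctan (Real.exp (x / s))).comp x (hg x)
    have h3 := h2.const_mul (4 : ℝ)
    refine h3.congr_deriv ?_
    field_simp
  have hderiv1 : deriv (fun α => 4 * Real.arctan (Real.exp (α / s)))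
      = fun x => 4 * (Real.exp (x / s) / ((1 + Real.exp (x / s) ^ 2) * s)) := by
    funext x; exact (hd1 x).deriv
  intro α
  set t := Real.exp (α / s) with htdef
  have ht : 0 < t := Real.exp_pos _
  have hden : (0:ℝ) < 1 + t ^ 2 := by positivity
  constructor
  · -- second derivative
    have hd2 : HasDerivAt (fun x => 4 * (Real.exp (x / s) / ((1 + Real.exp (x / s) ^ 2) * s)))
        (4 * t * (1 - t ^ 2) / ((1 + t ^ 2) ^ 2 * k)) α := by
      have hnum : HasDerivAt (fun x : ℝ => Real.exp (x / s)) (t / s) α := hg α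
      have hdenf : HasDerivAt (fun x : ℝ => (1 + Real.exp (x / s) ^ 2) * s)
          ((2 * t * (t / s)) * s) α := by
        have := ((hg α).pow 2).const_add 1
        have := this.mul_const s
        refine this.congr_deriv ?_
        ring
      have hdne : (1 + t ^ 2) * s ≠ 0 := by positivity
      have := (hnum.div hdenf hdne).const_mul (4 : ℝ)
      refine this.congr_deriv ?_
      rw [← hk']
      field_simp
      ring
    rw [hderiv1, hd2.deriv, sin_four_arctan]
    field_simp
  · have hD : deriv (fun α => 4 * Real.arctan (Real.exp (α / s))) α
        = 4 * (t / ((1 + t ^ 2) * s)) := (hd1 α).deriv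
    rw [hD, cos_four_arctan, ← hk']
    field_simp
    ring
end

section
/- In the travelling-wave Bäcklund setup, the function δ(α,β) := f(α)/(a(α)k²) + (c/(a(α)k)) · tanh(c(β + b(α) + K)) satisfies the partial differential equation δ_β = [ (1 − δ²) sin w − 2δ(cos w − λ²/k) + λ(δ² + 1) w' ] / (4λ), where w, w' are evaluated at α. Here b : ℝ → ℝ is an arbitrary differentiable function and K an arbitrary real constant. -/
lemma tanh_hasDerivAt (x : ℝ) : HasDerivAt Real.tanh (1 - Real.tanh x ^ 2) x := by
  have hc := Real.cosh_pos x
  have h : HasDerivAt (fun y => Real.sinh y / Real.cosh y)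
      ((Real.cosh x * Real.cosh x - Real.sinh x * Real.sinh x) / Real.cosh x ^ 2) x :=
    (Real.hasDerivAt_sinh x).div (Real.hasDerivAt_cosh x) hc.ne'
  have hfn : Real.tanh = fun y => Real.sinh y / Real.cosh y :=
    funext fun y => Real.tanh_eq_sinh_div_cosh y
  have hval : (Real.cosh x * Real.cosh x - Real.sinh x * Real.sinh x) / Real.cosh x ^ 2
      = 1 - Real.tanh x ^ 2 := by
    rw [Real.tanh_eq_sinh_div_cosh]
    have h1 : Real.cosh x ^ 2 - Real.sinh x ^ 2 = 1 := Real.cosh_sq_sub_sinh_sq x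
    field_simp
  rw [← hval, hfn]; exact h


/-- In the travelling-wave Bäcklund setup, the ansatz
`δ(α,β) = f(α)/(a(α)k²) + (c/(a(α)k)) tanh(c(β + b(α) + K))`
satisfies the β-equation of the Bäcklund system:
`δ_β = [(1 − δ²) sin w − 2δ(cos w − λ²/k) + λ(δ² + 1) w'] / (4λ)`. -/
theorem delta_beta_equation (k lam l K : ℝ) (hk : k ≠ 0) (hlam : lam ≠ 0)
    (w : ℝ → ℝ) (hw : Differentiable ℝ w) (hw' : Differentiable ℝ (deriv w))
    (hode : ∀ α : ℝ, k * deriv (deriv w) α = Real.sin (w α))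
    (hfi : ∀ α : ℝ, k * (deriv w α) ^ 2 = 2 * l - 2 * Real.cos (w α))
    (hdisc : lam ^ 4 - 2 * k * l * lam ^ 2 + k ^ 2 > 0)
    (a f : ℝ → ℝ) (c : ℝ)
    (ha : ∀ α : ℝ, a α = Real.sin (w α) / (4 * k * lam) - deriv w α / (4 * k))
    (hf : ∀ α : ℝ, f α = lam / 4 - k * Real.cos (w α) / (4 * lam))
    (hc : c = Real.sqrt (lam ^ 4 - 2 * k * l * lam ^ 2 + k ^ 2) / (4 * k * lam))
    (ha0 : ∀ α : ℝ, a α ≠ 0)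
    (b : ℝ → ℝ) (hb : Differentiable ℝ b)
    (δ : ℝ → ℝ → ℝ)
    (hδ : ∀ α β : ℝ, δ α β
      = f α / (a α * k ^ 2) + (c / (a α * k)) * Real.tanh (c * (β + b α + K))) :
    ∀ α β : ℝ, pd2 δ α β
      = ((1 - (δ α β) ^ 2) * Real.sin (w α)
          - 2 * δ α β * (Real.cos (w α) - lam ^ 2 / k)
          + lam * ((δ α β) ^ 2 + 1) * deriv w α) / (4 * lam) := by
  intro α β
  have hlin : HasDerivAt (fun β' : ℝ => c * (β' + b α + K)) c β := by
    simpa using (((hasDerivAt_id β).add_const (b α)).add_const K).const_mul c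
  have hth : HasDerivAt (fun β' => Real.tanh (c * (β' + b α + K)))
      ((1 - Real.tanh (c * (β + b α + K)) ^ 2) * c) β :=
    (tanh_hasDerivAt _).comp β hlin
  have hD : HasDerivAt (fun β' => δ α β')
      (c / (a α * k) * ((1 - Real.tanh (c * (β + b α + K)) ^ 2) * c)) β := by
    have h1 := ((hth.const_mul (c / (a α * k))).const_add (f α / (a α * k ^ 2)))
    have h2 : (fun β' => δ α β') = fun β' =>
        f α / (a α * k ^ 2) + c / (a α * k) * Real.tanh (c * (β' + b α + K)) :=
      funext fun β' => hδ α β'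
    rw [h2]
    convert h1 using 1
  have hpd : pd2 δ α β
      = c / (a α * k) * ((1 - Real.tanh (c * (β + b α + K)) ^ 2) * c) := by
    rw [pd2, hD.deriv]
  rw [hpd, hδ α β]
  -- algebra
  have hc2 : 16 * k ^ 2 * lam ^ 2 * c ^ 2 = lam ^ 4 - 2 * k * l * lam ^ 2 + k ^ 2 := by
    rw [hc]
    rw [div_pow, Real.sq_sqrt hdisc.le]
    field_simp
    ring
  have pyth : Real.sin (w α) ^ 2 + Real.cos (w α) ^ 2 = 1 := Real.sin_sq_add_cos_sq _
  have hA : Real.sin (w α) - lam * deriv w α = 4 * k * lam * a α := by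
    rw [ha α]; field_simp
  have hB : k * Real.cos (w α) - lam ^ 2 = -(4 * lam * f α) := by
    rw [hf α]; field_simp; ring
  have h16 : 16 * lam ^ 2 * (f α) ^ 2 + k ^ 2 * Real.sin (w α) ^ 2
      - k ^ 2 * lam ^ 2 * (deriv w α) ^ 2 = 16 * k ^ 2 * lam ^ 2 * c ^ 2 := by
    rw [hf α, hc2]
    field_simp
    linear_combination (16*k^2) * pyth - (16*k*lam^2) * hfi α
  have key3 : (4*lam) * (4 * lam * k ^ 2 * c ^ 2)
      = (4*lam) * (a α * k ^ 3 * (Real.sin (w α) + lam * deriv w α) + 4 * lam * (f α) ^ 2) := by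
    linear_combination (k ^ 2 * (Real.sin (w α) + lam * deriv w α)) * hA - h16
  have hlam4 : (4:ℝ) * lam ≠ 0 := by simp [hlam]
  have key4 : 4 * lam * k ^ 2 * c ^ 2
      = a α * k ^ 3 * (Real.sin (w α) + lam * deriv w α) + 4 * lam * (f α) ^ 2 :=
    mul_left_cancel₀ hlam4 key3
  have ha0' := ha0 α
  generalize Real.tanh (c * (β + b α + K)) = T
  field_simp
  linear_combination ((f α + c*T*k)^2) * hA
    + (2*a α*k*(f α + c*T*k)) * hB + (a α*k) * key4
end

section
/- Let k ≠ 0, λ ≠ 0 be reals, let w : ℝ → ℝ be twice differentiable with k·w'' = sin w, and let δ : ℝ² → ℝ be a differentiable function satisfying the system δ_α = [ (δ² − 1) sin w + 2δ(cos w + λ²/k) + λ(δ² + 1) w' ] / (4λ) and δ_β = [ (1 − δ²) sin w − 2δ(cos w − λ²/k) + λ(δ² + 1) w' ] / (4λ), where w, w' are evaluated at α. Then the functions ω(ξ,η) := w(kξ + η) and ω̃(ξ,η) := 4 arctan δ(kξ + η, kξ − η) − w(kξ + η) satisfy the Bäcklund transformation system with parameter λ: ((ω̃ − ω)/2)_ξ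 = λ sin((ω̃ + ω)/2) and ((ω̃ + ω)/2)_η = (1/λ) sin((ω̃ − ω)/2). -/
lemma sin_two_arctan (x : ℝ) : Real.sin (2 * Real.arctan x) = 2*x/(1+x^2) := by
  have h : Real.sqrt (1+x^2) ^ 2 = 1 + x^2 := Real.sq_sqrt (by positivity)
  have h0 : Real.sqrt (1+x^2) ≠ 0 := by positivity
  rw [Real.sin_two_mul, Real.sin_arctan, Real.cos_arctan]
  field_simp
  rw [h]

lemma cos_two_arctan (x : ℝ) : Real.cos (2 * Real.arctan x) = (1-x^2)/(1+x^2) := by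
  have h : Real.sqrt (1+x^2) ^ 2 = 1 + x^2 := Real.sq_sqrt (by positivity)
  have h0 : Real.sqrt (1+x^2) ≠ 0 := by positivity
  rw [Real.cos_two_mul, Real.cos_arctan]
  field_simp
  nlinarith [h]

/-- If `δ(α,β)` satisfies the Riccati-type system in the `α,β` variables, then
`ω(ξ,η) := w(kξ+η)` and `ω̃(ξ,η) := 4 arctan δ(kξ+η, kξ−η) − w(kξ+η)` satisfy the
Bäcklund transformation system with parameter `λ`. -/
theorem backlund_from_delta_system (k lam : ℝ) (hk : k ≠ 0) (hlam : lam ≠ 0)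
    (w : ℝ → ℝ) (hw : Differentiable ℝ w) (hw' : Differentiable ℝ (deriv w))
    (hode : ∀ α : ℝ, k * deriv (deriv w) α = Real.sin (w α))
    (δ : ℝ → ℝ → ℝ)
    (hδdiff : Differentiable ℝ fun p : ℝ × ℝ => δ p.1 p.2)
    (hδα : ∀ α β : ℝ, pd1 δ α β
      = (((δ α β) ^ 2 - 1) * Real.sin (w α)
          + 2 * δ α β * (Real.cos (w α) + lam ^ 2 / k)
          + lam * ((δ α β) ^ 2 + 1) * deriv w α) / (4 * lam))
    (hδβ : ∀ α β : ℝ, pd2 δ α β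
      = ((1 - (δ α β) ^ 2) * Real.sin (w α)
          - 2 * δ α β * (Real.cos (w α) - lam ^ 2 / k)
          + lam * ((δ α β) ^ 2 + 1) * deriv w α) / (4 * lam)) :
    IsBacklund lam (fun ξ η => w (k * ξ + η))
      (fun ξ η => 4 * Real.arctan (δ (k * ξ + η) (k * ξ - η)) - w (k * ξ + η)) := by
  classical
  set F : ℝ × ℝ → ℝ := fun p => δ p.1 p.2 with hFdef
  have hF : ∀ p : ℝ × ℝ, HasFDerivAt F (fderiv ℝ F p) p :=
    fun p => (hδdiff p).hasFDerivAt
  have hpd1 : ∀ a b : ℝ, fderiv ℝ F (a, b) (1, 0) = pd1 δ a b := by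
    intro a b
    have h1 : HasDerivAt (fun x' : ℝ => ((x', b) : ℝ × ℝ)) ((1:ℝ), (0:ℝ)) a :=
      (hasDerivAt_id a).prodMk (hasDerivAt_const a b)
    have h2 : HasDerivAt (fun x' : ℝ => δ x' b) (fderiv ℝ F (a, b) (1, 0)) a :=
      by have := (hF (a, b)).comp_hasDerivAt a h1; exact this
    exact (h2.deriv).symm
  have hpd2 : ∀ a b : ℝ, fderiv ℝ F (a, b) (0, 1) = pd2 δ a b := by
    intro a b
    have h1 : HasDerivAt (fun y' : ℝ => ((a, y') : ℝ × ℝ)) ((0:ℝ), (1:ℝ)) b :=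
      (hasDerivAt_const b a).prodMk (hasDerivAt_id b)
    have h2 : HasDerivAt (fun y' : ℝ => δ a y') (fderiv ℝ F (a, b) (0, 1)) b :=
      by have := (hF (a, b)).comp_hasDerivAt b h1; exact this
    exact (h2.deriv).symm
  have hdir : ∀ (a b u v : ℝ), fderiv ℝ F (a, b) (u, v)
      = u * pd1 δ a b + v * pd2 δ a b := by
    intro a b u v
    have huv : ((u, v) : ℝ × ℝ) = u • ((1:ℝ), (0:ℝ)) + v • ((0:ℝ), (1:ℝ)) := by
      simp [Prod.ext_iff]
    rw [huv, map_add, map_smul, map_smul, smul_eq_mul, smul_eq_mul, hpd1, hpd2]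
  constructor
  · intro ξ η
    set a : ℝ := k * ξ + η with ha
    set b : ℝ := k * ξ - η with hb
    set d : ℝ := δ a b with hd
    have hline : HasDerivAt (fun ξ' : ℝ => ((k * ξ' + η, k * ξ' - η) : ℝ × ℝ)) (k, k) ξ := by
      have h1 : HasDerivAt (fun ξ' : ℝ => k * ξ' + η) k ξ := by
        simpa using ((hasDerivAt_id ξ).const_mul k).add_const η
      have h2 : HasDerivAt (fun ξ' : ℝ => k * ξ' - η) k ξ := by
        simpa using ((hasDerivAt_id ξ).const_mul k).sub_const η
      exact h1.prodMk h2
    have hδline : HasDerivAt (fun ξ' : ℝ => δ (k * ξ' + η) (k * ξ' - η))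
        (fderiv ℝ F (a, b) (k, k)) ξ := by have := (hF (a, b)).comp_hasDerivAt ξ hline; exact this
    rw [hdir] at hδline
    have harctan : HasDerivAt (fun ξ' : ℝ => Real.arctan (δ (k * ξ' + η) (k * ξ' - η)))
        ((1 / (1 + d ^ 2)) * (k * pd1 δ a b + k * pd2 δ a b)) ξ :=
      by have := (Real.hasDerivAt_arctan d).comp ξ hδline; exact this
    have hwline : HasDerivAt (fun ξ' : ℝ => w (k * ξ' + η)) (deriv w a * k) ξ := by
      have h1 : HasDerivAt (fun ξ' : ℝ => k * ξ' + η) k ξ := by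
        simpa using ((hasDerivAt_id ξ).const_mul k).add_const η
      exact ((hw a).hasDerivAt).comp ξ h1
    have htot : HasDerivAt (fun ξ' : ℝ =>
        (4 * Real.arctan (δ (k * ξ' + η) (k * ξ' - η)) - w (k * ξ' + η) - w (k * ξ' + η)) / 2)
        ((4 * ((1 / (1 + d ^ 2)) * (k * pd1 δ a b + k * pd2 δ a b))
          - deriv w a * k - deriv w a * k) / 2) ξ :=
      (((harctan.const_mul 4).sub hwline).sub hwline).div_const 2
    have hgoalL : pd1 (fun ξ η => ((4 * Real.arctan (δ (k * ξ + η) (k * ξ - η)) - w (k * ξ + η))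
          - w (k * ξ + η)) / 2) ξ η
        = (4 * ((1 / (1 + d ^ 2)) * (k * pd1 δ a b + k * pd2 δ a b))
          - deriv w a * k - deriv w a * k) / 2 := htot.deriv
    show pd1 _ ξ η = _
    rw [hgoalL]
    have harg : (4 * Real.arctan (δ (k * ξ + η) (k * ξ - η)) - w (k * ξ + η) + w (k * ξ + η)) / 2
        = 2 * Real.arctan d := by rw [← ha, ← hb, ← hd]; ring
    rw [harg, sin_two_arctan, hδα a b, hδβ a b, ← hd]
    have h1 : (1 : ℝ) + d ^ 2 ≠ 0 := by positivity
    field_simp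
    ring
  · intro ξ η
    set a : ℝ := k * ξ + η with ha
    set b : ℝ := k * ξ - η with hb
    set d : ℝ := δ a b with hd
    have hline : HasDerivAt (fun η' : ℝ => ((k * ξ + η', k * ξ - η') : ℝ × ℝ)) ((1:ℝ), (-1:ℝ)) η := by
      have h1 : HasDerivAt (fun η' : ℝ => k * ξ + η') 1 η := by
        simpa using (hasDerivAt_id η).const_add (k * ξ)
      have h2 : HasDerivAt (fun η' : ℝ => k * ξ - η') (-1) η := by
        simpa using (hasDerivAt_id η).const_sub (k * ξ)
      exact h1.prodMk h2
    have hδline : HasDerivAt (fun η' : ℝ => δ (k * ξ + η') (k * ξ - η'))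
        (fderiv ℝ F (a, b) (1, -1)) η := by have := (hF (a, b)).comp_hasDerivAt η hline; exact this
    rw [hdir] at hδline
    have harctan : HasDerivAt (fun η' : ℝ => Real.arctan (δ (k * ξ + η') (k * ξ - η')))
        ((1 / (1 + d ^ 2)) * (1 * pd1 δ a b + -1 * pd2 δ a b)) η :=
      by have := (Real.hasDerivAt_arctan d).comp η hδline; exact this
    have hwline : HasDerivAt (fun η' : ℝ => w (k * ξ + η')) (deriv w a * 1) η := by
      have h1 : HasDerivAt (fun η' : ℝ => k * ξ + η') 1 η := by
        simpa using (hasDerivAt_id η).const_add (k * ξ)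
      exact ((hw a).hasDerivAt).comp η h1
    have htot : HasDerivAt (fun η' : ℝ =>
        (4 * Real.arctan (δ (k * ξ + η') (k * ξ - η')) - w (k * ξ + η') + w (k * ξ + η')) / 2)
        ((4 * ((1 / (1 + d ^ 2)) * (1 * pd1 δ a b + -1 * pd2 δ a b))
          - deriv w a * 1 + deriv w a * 1) / 2) η :=
      (((harctan.const_mul 4).sub hwline).add hwline).div_const 2
    have hgoalL : pd2 (fun ξ η => ((4 * Real.arctan (δ (k * ξ + η) (k * ξ - η)) - w (k * ξ + η))
          + w (k * ξ + η)) / 2) ξ η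
        = (4 * ((1 / (1 + d ^ 2)) * (1 * pd1 δ a b + -1 * pd2 δ a b))
          - deriv w a * 1 + deriv w a * 1) / 2 := htot.deriv
    show pd2 _ ξ η = _
    rw [hgoalL]
    have harg : (4 * Real.arctan (δ (k * ξ + η) (k * ξ - η)) - w (k * ξ + η) - w (k * ξ + η)) / 2
        = 2 * Real.arctan d - w a := by rw [← ha, ← hb, ← hd]; ring
    rw [harg, Real.sin_sub, sin_two_arctan, cos_two_arctan, hδα a b, hδβ a b, ← hd]
    have h1 : (1 : ℝ) + d ^ 2 ≠ 0 := by positivity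
    field_simp
    ring
end

section
/- Let λ ≠ 0 and let ω, ω̃ : ℝ² → ℝ be differentiable functions satisfying the Bäcklund transformation system with parameter λ, and let g : ℝ² → ℝ be a differentiable function satisfying g_ξ = λ g cos((ω̃ + ω)/2) and g_η = (g/λ) cos((ω̃ − ω)/2). Then the 1-forms defining the associated potentials x and y are closed, i.e. the mixed-derivative compatibility conditions hold: ∂_η[ λ g sin((ω̃ + ω)/2) ] = ∂_ξ[ (1/λ) g sin((ω̃ − ω)/2) ] (in fact both sides equal g sin ω̃), and ∂_η[ (λ/g) sin((ω̃ + ω)/2) ] = ∂_ξ[ −(1/(λ g)) sin((ω̃ − ω)/2) ] wherever g ≠ 0 (in fact both sides equal −(1/g) sin ω). -/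
/-- Compatibility (closedness) of the 1-forms defining the associated potentials `x`
and `y`: both mixed-derivative conditions hold, the common values being `g sin ω̃` and
`−(1/g) sin ω` respectively. -/
theorem potentials_one_forms_closed (lam : ℝ) (hlam : lam ≠ 0)
    (ω ω' g : ℝ → ℝ → ℝ)
    (hω : Differentiable ℝ fun p : ℝ × ℝ => ω p.1 p.2)
    (hω' : Differentiable ℝ fun p : ℝ × ℝ => ω' p.1 p.2)
    (hgdiff : Differentiable ℝ fun p : ℝ × ℝ => g p.1 p.2)
    (hB : IsBacklund lam ω ω')
    (hgξ : ∀ ξ η : ℝ, pd1 g ξ η = lam * g ξ η * Real.cos ((ω' ξ η + ω ξ η) / 2))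
    (hgη : ∀ ξ η : ℝ, pd2 g ξ η = (g ξ η / lam) * Real.cos ((ω' ξ η - ω ξ η) / 2)) :
    ∀ ξ η : ℝ,
      (pd2 (fun ξ η => lam * g ξ η * Real.sin ((ω' ξ η + ω ξ η) / 2)) ξ η
          = pd1 (fun ξ η => (1 / lam) * g ξ η * Real.sin ((ω' ξ η - ω ξ η) / 2)) ξ η ∧
        pd2 (fun ξ η => lam * g ξ η * Real.sin ((ω' ξ η + ω ξ η) / 2)) ξ η
          = g ξ η * Real.sin (ω' ξ η)) ∧
      (g ξ η ≠ 0 →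
        pd2 (fun ξ η => (lam / g ξ η) * Real.sin ((ω' ξ η + ω ξ η) / 2)) ξ η
            = pd1 (fun ξ η => -(1 / (lam * g ξ η)) * Real.sin ((ω' ξ η - ω ξ η) / 2)) ξ η ∧
          pd2 (fun ξ η => (lam / g ξ η) * Real.sin ((ω' ξ η + ω ξ η) / 2)) ξ η
            = -(1 / g ξ η) * Real.sin (ω ξ η)) := by
  intro ξ η
  set s := (ω' ξ η + ω ξ η) / 2 with hs
  set d := (ω' ξ η - ω ξ η) / 2 with hd
  have hsl1 : ∀ (f : ℝ → ℝ → ℝ), Differentiable ℝ (fun p : ℝ × ℝ => f p.1 p.2) →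
      DifferentiableAt ℝ (fun x => f x η) ξ := fun f hf =>
    (hf.comp (differentiable_id.prodMk (differentiable_const η))).differentiableAt
  have hsl2 : ∀ (f : ℝ → ℝ → ℝ), Differentiable ℝ (fun p : ℝ × ℝ => f p.1 p.2) →
      DifferentiableAt ℝ (fun y => f ξ y) η := fun f hf =>
    (hf.comp ((differentiable_const ξ).prodMk differentiable_id)).differentiableAt
  -- derivative of d in ξ
  have hD1 : HasDerivAt (fun x => (ω' x η - ω x η) / 2) (lam * Real.sin s) ξ := by
    have hdiff : DifferentiableAt ℝ (fun x => (ω' x η - ω x η) / 2) ξ :=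
      ((hsl1 ω' hω').sub (hsl1 ω hω)).div_const 2
    have h := hdiff.hasDerivAt
    have hv : deriv (fun x => (ω' x η - ω x η) / 2) ξ = lam * Real.sin s := by
      simpa [pd1, hs] using hB.1 ξ η
    rwa [hv] at h
  -- derivative of s in η
  have hS2 : HasDerivAt (fun y => (ω' ξ y + ω ξ y) / 2) ((1 / lam) * Real.sin d) η := by
    have hdiff : DifferentiableAt ℝ (fun y => (ω' ξ y + ω ξ y) / 2) η :=
      ((hsl2 ω' hω').add (hsl2 ω hω)).div_const 2
    have h := hdiff.hasDerivAt
    have hv : deriv (fun y => (ω' ξ y + ω ξ y) / 2) η = (1 / lam) * Real.sin d := by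
      simpa [pd2, hd] using hB.2 ξ η
    rwa [hv] at h
  -- derivatives of g
  have hg1 : HasDerivAt (fun x => g x η) (lam * g ξ η * Real.cos s) ξ := by
    have h := (hsl1 g hgdiff).hasDerivAt
    have hv : deriv (fun x => g x η) ξ = lam * g ξ η * Real.cos s := by
      simpa [pd1, hs] using hgξ ξ η
    rwa [hv] at h
  have hg2 : HasDerivAt (fun y => g ξ y) (g ξ η / lam * Real.cos d) η := by
    have h := (hsl2 g hgdiff).hasDerivAt
    have hv : deriv (fun y => g ξ y) η = g ξ η / lam * Real.cos d := by
      simpa [pd2, hd] using hgη ξ η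
    rwa [hv] at h
  -- sine compositions
  have hsinS2 : HasDerivAt (fun y => Real.sin ((ω' ξ y + ω ξ y) / 2))
      (Real.cos s * ((1 / lam) * Real.sin d)) η := hS2.sin
  have hsinD1 : HasDerivAt (fun x => Real.sin ((ω' x η - ω x η) / 2))
      (Real.cos d * (lam * Real.sin s)) ξ := hD1.sin
  have hω'sd : ω' ξ η = s + d := by rw [hs, hd]; ring
  have hωsd : ω ξ η = s - d := by rw [hs, hd]; ring
  constructor
  · -- first 1-form
    have hA : HasDerivAt (fun y => lam * g ξ y * Real.sin ((ω' ξ y + ω ξ y) / 2))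
        (lam * (g ξ η / lam * Real.cos d) * Real.sin s
          + lam * g ξ η * (Real.cos s * ((1 / lam) * Real.sin d))) η := by
      have := (hg2.const_mul lam).mul hsinS2
      exact this
    have hB' : HasDerivAt (fun x => (1 / lam) * g x η * Real.sin ((ω' x η - ω x η) / 2))
        ((1 / lam) * (lam * g ξ η * Real.cos s) * Real.sin d
          + (1 / lam) * g ξ η * (Real.cos d * (lam * Real.sin s))) ξ := by
      have := (hg1.const_mul (1 / lam)).mul hsinD1
      exact this
    have eA : pd2 (fun ξ η => lam * g ξ η * Real.sin ((ω' ξ η + ω ξ η) / 2)) ξ η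
        = g ξ η * Real.sin (ω' ξ η) := by
      have := hA.deriv
      simp only [pd2]
      rw [this, hω'sd, Real.sin_add]
      field_simp
    have eB : pd1 (fun ξ η => (1 / lam) * g ξ η * Real.sin ((ω' ξ η - ω ξ η) / 2)) ξ η
        = g ξ η * Real.sin (ω' ξ η) := by
      have := hB'.deriv
      simp only [pd1]
      rw [this, hω'sd, Real.sin_add]
      field_simp
      ring
    exact ⟨eA.trans eB.symm, eA⟩
  · intro hg0
    have hC : HasDerivAt (fun y => lam / g ξ y * Real.sin ((ω' ξ y + ω ξ y) / 2))
        (((0 * g ξ η - lam * (g ξ η / lam * Real.cos d)) / g ξ η ^ 2) * Real.sin s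
          + lam / g ξ η * (Real.cos s * ((1 / lam) * Real.sin d))) η := by
      exact ((hasDerivAt_const η lam).div hg2 hg0).mul hsinS2
    have hDq : HasDerivAt (fun x => -(1 / (lam * g x η)) * Real.sin ((ω' x η - ω x η) / 2))
        ((-((0 * (lam * g ξ η) - 1 * (lam * (lam * g ξ η * Real.cos s))) / (lam * g ξ η) ^ 2))
            * Real.sin d
          + (-(1 / (lam * g ξ η))) * (Real.cos d * (lam * Real.sin s))) ξ := by
      have hden : HasDerivAt (fun x => lam * g x η) (lam * (lam * g ξ η * Real.cos s)) ξ :=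
        hg1.const_mul lam
      have hq := (((hasDerivAt_const ξ (1 : ℝ)).div hden (mul_ne_zero hlam hg0)).neg).mul hsinD1
      exact hq
    have eC : pd2 (fun ξ η => lam / g ξ η * Real.sin ((ω' ξ η + ω ξ η) / 2)) ξ η
        = -(1 / g ξ η) * Real.sin (ω ξ η) := by
      have := hC.deriv
      simp only [pd2]
      rw [this, hωsd, Real.sin_sub]
      field_simp
      ring
    have eD : pd1 (fun ξ η => -(1 / (lam * g ξ η)) * Real.sin ((ω' ξ η - ω ξ η) / 2)) ξ η
        = -(1 / g ξ η) * Real.sin (ω ξ η) := by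
      have := hDq.deriv
      simp only [pd1]
      rw [this, hωsd, Real.sin_sub]
      field_simp
      ring
    exact ⟨eC.trans eD.symm, eC⟩
end

section
/- Let λ ≠ 0 and let ω, ω̃ : ℝ² → ℝ be differentiable functions satisfying the Bäcklund transformation system with parameter λ. Then the system defining the potential g is compatible: ∂_η[ λ cos((ω̃ + ω)/2) ] = ∂_ξ[ (1/λ) cos((ω̃ − ω)/2) ], so that the two equations g_ξ = λ g cos((ω̃ + ω)/2), g_η = (g/λ) cos((ω̃ − ω)/2) admit a common nonvanishing solution locally. -/
open intervalIntegral MeasureTheory in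
/-- Abstract form: `A = (ω̃-ω)/2`, `B = (ω̃+ω)/2`. -/
theorem backlund_aux (lam : ℝ) (hlam : lam ≠ 0) (A B : ℝ → ℝ → ℝ)
    (contA : Continuous fun p : ℝ × ℝ => A p.1 p.2)
    (contB : Continuous fun p : ℝ × ℝ => B p.1 p.2)
    (hA : ∀ ξ η : ℝ, HasDerivAt (fun x => A x η) (lam * Real.sin (B ξ η)) ξ)
    (hBd : ∀ ξ η : ℝ, HasDerivAt (fun y => B ξ y) ((1 / lam) * Real.sin (A ξ η)) η) :
    (∀ ξ η : ℝ,
      pd2 (fun ξ η => lam * Real.cos (B ξ η)) ξ η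
        = pd1 (fun ξ η => (1 / lam) * Real.cos (A ξ η)) ξ η) ∧
    (∀ ξ₀ η₀ : ℝ, ∃ ε > (0 : ℝ), ∃ g : ℝ → ℝ → ℝ,
      ∀ ξ η : ℝ, (ξ, η) ∈ Metric.ball ((ξ₀ : ℝ), (η₀ : ℝ)) ε →
        g ξ η ≠ 0 ∧
        pd1 g ξ η = lam * g ξ η * Real.cos (B ξ η) ∧
        pd2 g ξ η = (g ξ η / lam) * Real.cos (A ξ η)) := by
  -- derivative of `x ↦ (1/lam) cos (A x η)`
  have hQ : ∀ ξ η : ℝ, HasDerivAt (fun x => (1 / lam) * Real.cos (A x η))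
      (-(Real.sin (A ξ η) * Real.sin (B ξ η))) ξ := by
    intro ξ η
    have h := ((Real.hasDerivAt_cos (A ξ η)).comp ξ (hA ξ η)).const_mul (1 / lam)
    refine h.congr_deriv ?_
    have h1 : lam⁻¹ * lam = 1 := inv_mul_cancel₀ hlam
    linear_combination (-(Real.sin (A ξ η) * Real.sin (B ξ η))) * h1
  -- derivative of `y ↦ lam cos (B ξ y)`
  have hP : ∀ ξ η : ℝ, HasDerivAt (fun y => lam * Real.cos (B ξ y))
      (-(Real.sin (A ξ η) * Real.sin (B ξ η))) η := by
    intro ξ η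
    have h := ((Real.hasDerivAt_cos (B ξ η)).comp η (hBd ξ η)).const_mul lam
    refine h.congr_deriv ?_
    have h1 : lam⁻¹ * lam = 1 := inv_mul_cancel₀ hlam
    linear_combination (-(Real.sin (A ξ η) * Real.sin (B ξ η))) * h1
  constructor
  · intro ξ η
    show deriv (fun y => lam * Real.cos (B ξ y)) η
        = deriv (fun x => (1 / lam) * Real.cos (A x η)) ξ
    rw [(hP ξ η).deriv, (hQ ξ η).deriv]
  · intro ξ₀ η₀
    refine ⟨1, one_pos, fun ξ η =>
      Real.exp ((∫ s in ξ₀..ξ, lam * Real.cos (B s η₀))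
        + ∫ t in η₀..η, (1 / lam) * Real.cos (A ξ t)), fun ξ η _ => ?_⟩
    have contAx : ∀ x : ℝ, Continuous fun t => A x t := fun x =>
      contA.comp (continuous_const.prodMk continuous_id)
    have contB1 : Continuous fun s => B s η₀ :=
      contB.comp (continuous_id.prodMk continuous_const)
    -- derivative in η
    have hI2 : HasDerivAt (fun y => ∫ t in η₀..y, (1 / lam) * Real.cos (A ξ t))
        ((1 / lam) * Real.cos (A ξ η)) η :=
      ((continuous_const.mul (Real.continuous_cos.comp (contAx ξ))).integral_hasStrictDerivAt η₀ η).hasDerivAt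
    have hg2 : HasDerivAt (fun y =>
        Real.exp ((∫ s in ξ₀..ξ, lam * Real.cos (B s η₀))
          + ∫ t in η₀..y, (1 / lam) * Real.cos (A ξ t)))
        (Real.exp ((∫ s in ξ₀..ξ, lam * Real.cos (B s η₀))
          + ∫ t in η₀..η, (1 / lam) * Real.cos (A ξ t)) * ((1 / lam) * Real.cos (A ξ η))) η :=
      ((hI2.const_add _)).exp
    -- derivative in ξ : first integral
    have hI1 : HasDerivAt (fun x => ∫ s in ξ₀..x, lam * Real.cos (B s η₀))
        (lam * Real.cos (B ξ η₀)) ξ :=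
      ((continuous_const.mul (Real.continuous_cos.comp contB1)).integral_hasStrictDerivAt ξ₀ ξ).hasDerivAt
    -- derivative in ξ : parametric integral
    set F' : ℝ → ℝ → ℝ := fun x t =>
      (1 / lam) * (-Real.sin (A x t) * (lam * Real.sin (B x t))) with hF'
    have contF' : ∀ x, Continuous fun t => F' x t := by
      intro x
      exact continuous_const.mul ((Real.continuous_sin.comp (contAx x)).neg.mul
        (continuous_const.mul (Real.continuous_sin.comp (contB.comp
          (continuous_const.prodMk continuous_id)))))
    have hI2x : HasDerivAt (fun x => ∫ t in η₀..η, (1 / lam) * Real.cos (A x t))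
        (∫ t in η₀..η, F' ξ t) ξ := by
      have key := intervalIntegral.hasDerivAt_integral_of_dominated_loc_of_deriv_le
        (F := fun x t => (1 / lam) * Real.cos (A x t)) (F' := F')
        (μ := volume) (a := η₀) (b := η) (x₀ := ξ) (bound := fun _ => 1)
        Filter.univ_mem
        (Filter.Eventually.of_forall fun x =>
          (((continuous_const.mul
            (Real.continuous_cos.comp (contAx x))).aestronglyMeasurable) : AEStronglyMeasurable
              (fun t => (1 / lam) * Real.cos (A x t)) _))
        ((continuous_const.mul (Real.continuous_cos.comp (contAx ξ))).intervalIntegrable η₀ η)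
        ((contF' ξ).aestronglyMeasurable)
        (Filter.Eventually.of_forall fun t _ x _ => by
          have heq : F' x t = -(Real.sin (A x t) * Real.sin (B x t)) := by
            rw [hF']; field_simp
          rw [Real.norm_eq_abs, heq, abs_neg, abs_mul]
          exact mul_le_one₀ (Real.abs_sin_le_one _) (abs_nonneg _)
            (Real.abs_sin_le_one _))
        (intervalIntegrable_const)
        (Filter.Eventually.of_forall fun t _ x _ =>
          ((Real.hasDerivAt_cos (A x t)).comp x (hA x t)).const_mul (1 / lam))
      exact key.2
    -- compute the parametric integral via FTC2
    have hint : (∫ t in η₀..η, F' ξ t)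
        = lam * Real.cos (B ξ η) - lam * Real.cos (B ξ η₀) := by
      have hd : ∀ t ∈ Set.uIcc η₀ η,
          HasDerivAt (fun y => lam * Real.cos (B ξ y)) (F' ξ t) t := by
        intro t _
        have heq : F' ξ t = -(Real.sin (A ξ t) * Real.sin (B ξ t)) := by
          rw [hF']; field_simp
        rw [heq]
        exact hP ξ t
      exact intervalIntegral.integral_eq_sub_of_hasDerivAt hd
        ((contF' ξ).intervalIntegrable η₀ η)
    have hg1 : HasDerivAt (fun x =>
        Real.exp ((∫ s in ξ₀..x, lam * Real.cos (B s η₀))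
          + ∫ t in η₀..η, (1 / lam) * Real.cos (A x t)))
        (Real.exp ((∫ s in ξ₀..ξ, lam * Real.cos (B s η₀))
          + ∫ t in η₀..η, (1 / lam) * Real.cos (A ξ t))
          * (lam * Real.cos (B ξ η₀) + ∫ t in η₀..η, F' ξ t)) ξ :=
      (hI1.add hI2x).exp
    refine ⟨Real.exp_ne_zero _, ?_, ?_⟩
    · show deriv (fun x =>
        Real.exp ((∫ s in ξ₀..x, lam * Real.cos (B s η₀))
          + ∫ t in η₀..η, (1 / lam) * Real.cos (A x t))) ξ = _
      rw [hg1.deriv, hint]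
      ring
    · show deriv (fun y =>
        Real.exp ((∫ s in ξ₀..ξ, lam * Real.cos (B s η₀))
          + ∫ t in η₀..y, (1 / lam) * Real.cos (A ξ t))) η = _
      rw [hg2.deriv]
      ring

/-- Compatibility of the system defining the potential `g`:
`∂_η[λ cos((ω̃+ω)/2)] = ∂_ξ[(1/λ) cos((ω̃−ω)/2)]`, so that the two equations
`g_ξ = λ g cos((ω̃+ω)/2)`, `g_η = (g/λ) cos((ω̃−ω)/2)` admit a common nonvanishing
solution locally. -/
theorem potential_g_compatibility (lam : ℝ) (hlam : lam ≠ 0)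
    (ω ω' : ℝ → ℝ → ℝ)
    (hω : Differentiable ℝ fun p : ℝ × ℝ => ω p.1 p.2)
    (hω' : Differentiable ℝ fun p : ℝ × ℝ => ω' p.1 p.2)
    (hB : IsBacklund lam ω ω') :
    (∀ ξ η : ℝ,
      pd2 (fun ξ η => lam * Real.cos ((ω' ξ η + ω ξ η) / 2)) ξ η
        = pd1 (fun ξ η => (1 / lam) * Real.cos ((ω' ξ η - ω ξ η) / 2)) ξ η) ∧
    (∀ ξ₀ η₀ : ℝ, ∃ ε > (0 : ℝ), ∃ g : ℝ → ℝ → ℝ,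
      ∀ ξ η : ℝ, (ξ, η) ∈ Metric.ball ((ξ₀ : ℝ), (η₀ : ℝ)) ε →
        g ξ η ≠ 0 ∧
        pd1 g ξ η = lam * g ξ η * Real.cos ((ω' ξ η + ω ξ η) / 2) ∧
        pd2 g ξ η = (g ξ η / lam) * Real.cos ((ω' ξ η - ω ξ η) / 2)) := by
  have contA : Continuous fun p : ℝ × ℝ => (ω' p.1 p.2 - ω p.1 p.2) / 2 :=
    ((hω'.continuous.sub hω.continuous)).div_const 2
  have contB : Continuous fun p : ℝ × ℝ => (ω' p.1 p.2 + ω p.1 p.2) / 2 :=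
    ((hω'.continuous.add hω.continuous)).div_const 2
  have hA : ∀ ξ η : ℝ, HasDerivAt (fun x => (ω' x η - ω x η) / 2)
      (lam * Real.sin ((ω' ξ η + ω ξ η) / 2)) ξ := by
    intro ξ η
    have hd : DifferentiableAt ℝ (fun x => (ω' x η - ω x η) / 2) ξ := by
      have h1 : DifferentiableAt ℝ (fun x => ω' x η) ξ :=
        ((hω' (ξ, η)).comp ξ (differentiableAt_id.prodMk (differentiableAt_const η)) :
          DifferentiableAt ℝ ((fun p : ℝ × ℝ => ω' p.1 p.2) ∘ fun x : ℝ => (id x, η)) ξ)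
      have h2 : DifferentiableAt ℝ (fun x => ω x η) ξ :=
        ((hω (ξ, η)).comp ξ (differentiableAt_id.prodMk (differentiableAt_const η)) :
          DifferentiableAt ℝ ((fun p : ℝ × ℝ => ω p.1 p.2) ∘ fun x : ℝ => (id x, η)) ξ)
      exact (h1.sub h2).div_const 2
    have h1 : deriv (fun x => (ω' x η - ω x η) / 2) ξ
        = lam * Real.sin ((ω' ξ η + ω ξ η) / 2) := hB.1 ξ η
    exact h1 ▸ hd.hasDerivAt
  have hBd : ∀ ξ η : ℝ, HasDerivAt (fun y => (ω' ξ y + ω ξ y) / 2)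
      ((1 / lam) * Real.sin ((ω' ξ η - ω ξ η) / 2)) η := by
    intro ξ η
    have hd : DifferentiableAt ℝ (fun y => (ω' ξ y + ω ξ y) / 2) η := by
      have h1 : DifferentiableAt ℝ (fun y => ω' ξ y) η :=
        ((hω' (ξ, η)).comp η ((differentiableAt_const ξ).prodMk differentiableAt_id) :
          DifferentiableAt ℝ ((fun p : ℝ × ℝ => ω' p.1 p.2) ∘ fun y : ℝ => (ξ, id y)) η)
      have h2 : DifferentiableAt ℝ (fun y => ω ξ y) η :=
        ((hω (ξ, η)).comp η ((differentiableAt_const ξ).prodMk differentiableAt_id) :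
          DifferentiableAt ℝ ((fun p : ℝ × ℝ => ω p.1 p.2) ∘ fun y : ℝ => (ξ, id y)) η)
      exact (h1.add h2).div_const 2
    have h1 : deriv (fun y => (ω' ξ y + ω ξ y) / 2) η
        = (1 / lam) * Real.sin ((ω' ξ η - ω ξ η) / 2) := hB.2 ξ η
    exact h1 ▸ hd.hasDerivAt
  exact backlund_aux lam hlam (fun ξ η => (ω' ξ η - ω ξ η) / 2)
    (fun ξ η => (ω' ξ η + ω ξ η) / 2) contA contB hA hBd
end

section
/- Let λ ≠ 0, let ω, ω̃ : U → ℝ (U ⊆ ℝ² open) be twice continuously differentiable and satisfy the Bäcklund transformation system with parameter λ, and let x, y, g : U → ℝ be twice continuously differentiable functions satisfying the associated potentials system with g > 0 on U. Suppose V ⊆ ℝ² is open and ψ : V → U is a twice continuously differentiable map such that x(ψ(u,v)) = u and y(ψ(u,v)) = v for all (u,v) ∈ V. Then the function Z(u,v) := 1/g(ψ(u,v))² satisfies the constant astigmatism equation Z_vv + (1/Z)_uu + 2 = 0 on V. -/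
/-- Partial derivative w.r.t. the first coordinate of a function on `ℝ × ℝ`. -/
noncomputable def pdx (F : ℝ × ℝ → ℝ) (p : ℝ × ℝ) : ℝ := deriv (fun u => F (u, p.2)) p.1

/-- Partial derivative w.r.t. the second coordinate of a function on `ℝ × ℝ`. -/
noncomputable def pdy (F : ℝ × ℝ → ℝ) (p : ℝ × ℝ) : ℝ := deriv (fun v => F (p.1, v)) p.2

lemma lineH_hasDerivAt (c x : ℝ) :
    HasDerivAt (fun u : ℝ => ((u, c) : ℝ × ℝ)) (1, 0) x :=
  (hasDerivAt_id x).prodMk (hasDerivAt_const x c)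

lemma lineV_hasDerivAt (c y : ℝ) :
    HasDerivAt (fun v : ℝ => ((c, v) : ℝ × ℝ)) (0, 1) y :=
  (hasDerivAt_const y c).prodMk (hasDerivAt_id y)

lemma fderiv_apply_pair (F : ℝ × ℝ → ℝ) (q : ℝ × ℝ) (v1 v2 : ℝ) :
    (fderiv ℝ F q) (v1, v2)
      = v1 * (fderiv ℝ F q) (1, 0) + v2 * (fderiv ℝ F q) (0, 1) := by
  have h : ((v1, v2) : ℝ × ℝ) = v1 • ((1:ℝ), (0:ℝ)) + v2 • ((0:ℝ), (1:ℝ)) := by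
    simp [Prod.ext_iff]
  rw [h, map_add, map_smul, map_smul, smul_eq_mul, smul_eq_mul]

lemma pdx_eq_fderiv (F : ℝ × ℝ → ℝ) (q : ℝ × ℝ) (hF : DifferentiableAt ℝ F q) :
    pdx F q = (fderiv ℝ F q) (1, 0) := by
  have h : HasDerivAt (fun u => F (u, q.2)) ((fderiv ℝ F q) (1, 0)) q.1 := by
    have := hF.hasFDerivAt.comp_hasDerivAt q.1 (lineH_hasDerivAt q.2 q.1)
    exact this
  exact h.deriv

lemma pdy_eq_fderiv (F : ℝ × ℝ → ℝ) (q : ℝ × ℝ) (hF : DifferentiableAt ℝ F q) :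
    pdy F q = (fderiv ℝ F q) (0, 1) := by
  have h : HasDerivAt (fun v => F (q.1, v)) ((fderiv ℝ F q) (0, 1)) q.2 := by
    have := hF.hasFDerivAt.comp_hasDerivAt q.2 (lineV_hasDerivAt q.1 q.2)
    exact this
  exact h.deriv

lemma pdx_hasDerivAt (F : ℝ × ℝ → ℝ) (q : ℝ × ℝ) (hF : DifferentiableAt ℝ F q) :
    HasDerivAt (fun u => F (u, q.2)) (pdx F q) q.1 := by
  rw [pdx_eq_fderiv F q hF]
  have := hF.hasFDerivAt.comp_hasDerivAt q.1 (lineH_hasDerivAt q.2 q.1)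
  exact this

lemma pdy_hasDerivAt (F : ℝ × ℝ → ℝ) (q : ℝ × ℝ) (hF : DifferentiableAt ℝ F q) :
    HasDerivAt (fun v => F (q.1, v)) (pdy F q) q.2 := by
  rw [pdy_eq_fderiv F q hF]
  have := hF.hasFDerivAt.comp_hasDerivAt q.2 (lineV_hasDerivAt q.1 q.2)
  exact this

lemma comp_pdx_hasDerivAt (ψ : ℝ × ℝ → ℝ × ℝ) (F : ℝ × ℝ → ℝ) (p : ℝ × ℝ)
    (hψ : DifferentiableAt ℝ ψ p) (hF : DifferentiableAt ℝ F (ψ p)) :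
    HasDerivAt (fun u => F (ψ (u, p.2)))
      (pdx F (ψ p) * (fderiv ℝ ψ p (1, 0)).1 + pdy F (ψ p) * (fderiv ℝ ψ p (1, 0)).2)
      p.1 := by
  have hline : HasDerivAt (fun u => ψ (u, p.2)) (fderiv ℝ ψ p (1, 0)) p.1 := by
    have := hψ.hasFDerivAt.comp_hasDerivAt p.1 (lineH_hasDerivAt p.2 p.1)
    exact this
  have h := hF.hasFDerivAt.comp_hasDerivAt p.1 hline
  have he : (fderiv ℝ F (ψ p)) (fderiv ℝ ψ p (1, 0))
      = pdx F (ψ p) * (fderiv ℝ ψ p (1, 0)).1 + pdy F (ψ p) * (fderiv ℝ ψ p (1, 0)).2 := by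
    rw [show (fderiv ℝ ψ p (1, 0))
        = ((fderiv ℝ ψ p (1, 0)).1, (fderiv ℝ ψ p (1, 0)).2) from rfl,
      fderiv_apply_pair, pdx_eq_fderiv F _ hF, pdy_eq_fderiv F _ hF]
    ring
  rw [he] at h
  exact h

lemma comp_pdy_hasDerivAt (ψ : ℝ × ℝ → ℝ × ℝ) (F : ℝ × ℝ → ℝ) (p : ℝ × ℝ)
    (hψ : DifferentiableAt ℝ ψ p) (hF : DifferentiableAt ℝ F (ψ p)) :
    HasDerivAt (fun v => F (ψ (p.1, v)))
      (pdx F (ψ p) * (fderiv ℝ ψ p (0, 1)).1 + pdy F (ψ p) * (fderiv ℝ ψ p (0, 1)).2)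
      p.2 := by
  have hline : HasDerivAt (fun v => ψ (p.1, v)) (fderiv ℝ ψ p (0, 1)) p.2 := by
    have := hψ.hasFDerivAt.comp_hasDerivAt p.2 (lineV_hasDerivAt p.1 p.2)
    exact this
  have h := hF.hasFDerivAt.comp_hasDerivAt p.2 hline
  have he : (fderiv ℝ F (ψ p)) (fderiv ℝ ψ p (0, 1))
      = pdx F (ψ p) * (fderiv ℝ ψ p (0, 1)).1 + pdy F (ψ p) * (fderiv ℝ ψ p (0, 1)).2 := by
    rw [show (fderiv ℝ ψ p (0, 1))
        = ((fderiv ℝ ψ p (0, 1)).1, (fderiv ℝ ψ p (0, 1)).2) from rfl,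
      fderiv_apply_pair, pdx_eq_fderiv F _ hF, pdy_eq_fderiv F _ hF]
    ring
  rw [he] at h
  exact h

lemma pdx_congr_nhds {F G : ℝ × ℝ → ℝ} {r : ℝ × ℝ} (h : F =ᶠ[nhds r] G) :
    pdx F r = pdx G r := by
  have hι : ContinuousAt (fun u : ℝ => ((u, r.2) : ℝ × ℝ)) r.1 := by fun_prop
  have h2 : (fun u : ℝ => F (u, r.2)) =ᶠ[nhds r.1] fun u => G (u, r.2) :=
    h.comp_tendsto (by simpa using hι.tendsto)
  exact h2.deriv_eq

lemma pdy_congr_nhds {F G : ℝ × ℝ → ℝ} {r : ℝ × ℝ} (h : F =ᶠ[nhds r] G) :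
    pdy F r = pdy G r := by
  have hι : ContinuousAt (fun v : ℝ => ((r.1, v) : ℝ × ℝ)) r.2 := by fun_prop
  have h2 : (fun v : ℝ => F (r.1, v)) =ᶠ[nhds r.2] fun v => G (r.1, v) :=
    h.comp_tendsto (by simpa using hι.tendsto)
  exact h2.deriv_eq

set_option maxHeartbeats 3000000 in
/-- If `(ω, ω̃)` satisfies the Bäcklund system with parameter `λ ≠ 0` on an open set
`U`, and `x, y, g` are the associated potentials with `g > 0` on `U`, and `ψ` inverts
the map `(x, y)` on an open set `V`, then `Z(u,v) := 1/g(ψ(u,v))²` satisfies the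
constant astigmatism equation `Z_vv + (1/Z)_uu + 2 = 0` on `V`. -/
theorem cae_from_backlund_potentials (lam : ℝ) (hlam : lam ≠ 0)
    (U V : Set (ℝ × ℝ)) (hU : IsOpen U) (hV : IsOpen V)
    (ω ω' x y g : ℝ × ℝ → ℝ)
    (hω : ContDiffOn ℝ 2 ω U) (hω' : ContDiffOn ℝ 2 ω' U)
    (hxC : ContDiffOn ℝ 2 x U) (hyC : ContDiffOn ℝ 2 y U) (hgC : ContDiffOn ℝ 2 g U)
    (hB1 : ∀ p ∈ U, pdx (fun q => (ω' q - ω q) / 2) p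
      = lam * Real.sin ((ω' p + ω p) / 2))
    (hB2 : ∀ p ∈ U, pdy (fun q => (ω' q + ω q) / 2) p
      = (1 / lam) * Real.sin ((ω' p - ω p) / 2))
    (hx1 : ∀ p ∈ U, pdx x p = lam * g p * Real.sin ((ω' p + ω p) / 2))
    (hx2 : ∀ p ∈ U, pdy x p = (1 / lam) * g p * Real.sin ((ω' p - ω p) / 2))
    (hy1 : ∀ p ∈ U, pdx y p = (lam / g p) * Real.sin ((ω' p + ω p) / 2))
    (hy2 : ∀ p ∈ U, pdy y p = -(1 / (lam * g p)) * Real.sin ((ω' p - ω p) / 2))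
    (hg1 : ∀ p ∈ U, pdx g p = lam * g p * Real.cos ((ω' p + ω p) / 2))
    (hg2 : ∀ p ∈ U, pdy g p = (g p / lam) * Real.cos ((ω' p - ω p) / 2))
    (hgpos : ∀ p ∈ U, 0 < g p)
    (ψ : ℝ × ℝ → ℝ × ℝ) (hψ : ContDiffOn ℝ 2 ψ V) (hψU : ∀ p ∈ V, ψ p ∈ U)
    (hψx : ∀ p ∈ V, x (ψ p) = p.1)
    (hψy : ∀ p ∈ V, y (ψ p) = p.2) :
    ∀ p ∈ V,
      pdy (pdy (fun q => 1 / (g (ψ q)) ^ 2)) p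
        + pdx (pdx (fun q => 1 / (1 / (g (ψ q)) ^ 2))) p + 2 = 0 := by
  set F2 : ℝ × ℝ → ℝ := fun r => Real.sin (ω r)
      / (g r * Real.sin ((ω' r + ω r) / 2) * Real.sin ((ω' r - ω r) / 2)) with hF2def
  set F3 : ℝ × ℝ → ℝ := fun r => g r * Real.sin (ω' r)
      / (Real.sin ((ω' r + ω r) / 2) * Real.sin ((ω' r - ω r) / 2)) with hF3def
  have main : ∀ p ∈ V,
      pdy (fun s => 1 / (g (ψ s)) ^ 2) p = F2 (ψ p) ∧
      pdx (fun s => (g (ψ s)) ^ 2) p = F3 (ψ p) ∧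
      pdy (fun s => F2 (ψ s)) p + pdx (fun s => F3 (ψ s)) p + 2 = 0 := by
    rintro ⟨u0, v0⟩ hp
    have hq : ψ (u0, v0) ∈ U := hψU _ hp
    have hψd : DifferentiableAt ℝ ψ (u0, v0) :=
      (hψ.differentiableOn (by norm_num)).differentiableAt (hV.mem_nhds hp)
    have hdiff : ∀ F : ℝ × ℝ → ℝ, ContDiffOn ℝ 2 F U → DifferentiableAt ℝ F (ψ (u0, v0)) :=
      fun F hF => (hF.contDiffAt (hU.mem_nhds hq)).differentiableAt (by norm_num)
    have hxd := hdiff x hxC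
    have hyd := hdiff y hyC
    have hgd := hdiff g hgC
    have hωd := hdiff ω hω
    have hω'd := hdiff ω' hω'
    have hGne : g (ψ (u0, v0)) ≠ 0 := (hgpos _ hq).ne'
    have hmemH : ∀ᶠ u in nhds u0, (u, v0) ∈ V := by
      have hc : ContinuousAt (fun u : ℝ => ((u, v0) : ℝ × ℝ)) u0 := by fun_prop
      exact hc.preimage_mem_nhds (hV.mem_nhds hp)
    have hmemV : ∀ᶠ v in nhds v0, (u0, v) ∈ V := by
      have hc : ContinuousAt (fun v : ℝ => ((u0, v) : ℝ × ℝ)) v0 := by fun_prop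
      exact hc.preimage_mem_nhds (hV.mem_nhds hp)
    -- Jacobian equations
    have hxH : HasDerivAt (fun u => x (ψ (u, v0)))
        (pdx x (ψ (u0, v0)) * (fderiv ℝ ψ (u0, v0) (1, 0)).1 + pdy x (ψ (u0, v0)) * (fderiv ℝ ψ (u0, v0) (1, 0)).2) u0 :=
      comp_pdx_hasDerivAt ψ x (u0, v0) hψd hxd
    have hxev : (fun u => x (ψ (u, v0))) =ᶠ[nhds u0] (fun u => u) :=
      hmemH.mono fun u hu => hψx _ hu
    have EX : pdx x (ψ (u0, v0)) * (fderiv ℝ ψ (u0, v0) (1, 0)).1 + pdy x (ψ (u0, v0)) * (fderiv ℝ ψ (u0, v0) (1, 0)).2 = 1 :=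
      hxH.unique ((hasDerivAt_id u0).congr_of_eventuallyEq hxev)
    have hyH : HasDerivAt (fun u => y (ψ (u, v0)))
        (pdx y (ψ (u0, v0)) * (fderiv ℝ ψ (u0, v0) (1, 0)).1 + pdy y (ψ (u0, v0)) * (fderiv ℝ ψ (u0, v0) (1, 0)).2) u0 :=
      comp_pdx_hasDerivAt ψ y (u0, v0) hψd hyd
    have hyev : (fun u => y (ψ (u, v0))) =ᶠ[nhds u0] (fun _ => v0) :=
      hmemH.mono fun u hu => hψy _ hu
    have EY : pdx y (ψ (u0, v0)) * (fderiv ℝ ψ (u0, v0) (1, 0)).1 + pdy y (ψ (u0, v0)) * (fderiv ℝ ψ (u0, v0) (1, 0)).2 = 0 :=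
      hyH.unique ((hasDerivAt_const u0 v0).congr_of_eventuallyEq hyev)
    have hxV : HasDerivAt (fun v => x (ψ (u0, v)))
        (pdx x (ψ (u0, v0)) * (fderiv ℝ ψ (u0, v0) (0, 1)).1 + pdy x (ψ (u0, v0)) * (fderiv ℝ ψ (u0, v0) (0, 1)).2) v0 :=
      comp_pdy_hasDerivAt ψ x (u0, v0) hψd hxd
    have hxev2 : (fun v => x (ψ (u0, v))) =ᶠ[nhds v0] (fun _ => u0) :=
      hmemV.mono fun v hv => hψx _ hv
    have EX2 : pdx x (ψ (u0, v0)) * (fderiv ℝ ψ (u0, v0) (0, 1)).1 + pdy x (ψ (u0, v0)) * (fderiv ℝ ψ (u0, v0) (0, 1)).2 = 0 :=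
      hxV.unique ((hasDerivAt_const v0 u0).congr_of_eventuallyEq hxev2)
    have hyV : HasDerivAt (fun v => y (ψ (u0, v)))
        (pdx y (ψ (u0, v0)) * (fderiv ℝ ψ (u0, v0) (0, 1)).1 + pdy y (ψ (u0, v0)) * (fderiv ℝ ψ (u0, v0) (0, 1)).2) v0 :=
      comp_pdy_hasDerivAt ψ y (u0, v0) hψd hyd
    have hyev2 : (fun v => y (ψ (u0, v))) =ᶠ[nhds v0] (fun v => v) :=
      hmemV.mono fun v hv => hψy _ hv
    have EY2 : pdx y (ψ (u0, v0)) * (fderiv ℝ ψ (u0, v0) (0, 1)).1 + pdy y (ψ (u0, v0)) * (fderiv ℝ ψ (u0, v0) (0, 1)).2 = 1 :=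
      hyV.unique ((hasDerivAt_id v0).congr_of_eventuallyEq hyev2)
    -- clean potential equations
    have hx2q : lam * pdy x (ψ (u0, v0)) = g (ψ (u0, v0)) * Real.sin ((ω' (ψ (u0, v0)) - ω (ψ (u0, v0))) / 2) := by
      rw [hx2 _ hq]; field_simp
    have hy1q : g (ψ (u0, v0)) * pdx y (ψ (u0, v0)) = lam * Real.sin ((ω' (ψ (u0, v0)) + ω (ψ (u0, v0))) / 2) := by
      rw [hy1 _ hq]; field_simp
    have hy2q : (lam * g (ψ (u0, v0))) * pdy y (ψ (u0, v0)) = -(Real.sin ((ω' (ψ (u0, v0)) - ω (ψ (u0, v0))) / 2)) := by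
      rw [hy2 _ hq]; field_simp
    -- solve the linear system
    have E1 : lam * lam * g (ψ (u0, v0)) * Real.sin ((ω' (ψ (u0, v0)) + ω (ψ (u0, v0))) / 2) * (fderiv ℝ ψ (u0, v0) (1, 0)).1 + g (ψ (u0, v0)) * Real.sin ((ω' (ψ (u0, v0)) - ω (ψ (u0, v0))) / 2) * (fderiv ℝ ψ (u0, v0) (1, 0)).2 = lam := by
      linear_combination lam * EX - lam * (fderiv ℝ ψ (u0, v0) (1, 0)).1 * (hx1 _ hq) - (fderiv ℝ ψ (u0, v0) (1, 0)).2 * hx2q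
    have E2 : lam * lam * Real.sin ((ω' (ψ (u0, v0)) + ω (ψ (u0, v0))) / 2) * (fderiv ℝ ψ (u0, v0) (1, 0)).1 - Real.sin ((ω' (ψ (u0, v0)) - ω (ψ (u0, v0))) / 2) * (fderiv ℝ ψ (u0, v0) (1, 0)).2 = 0 := by
      linear_combination lam * g (ψ (u0, v0)) * EY - lam * (fderiv ℝ ψ (u0, v0) (1, 0)).1 * hy1q - (fderiv ℝ ψ (u0, v0) (1, 0)).2 * hy2q
    have E3 : lam * lam * g (ψ (u0, v0)) * Real.sin ((ω' (ψ (u0, v0)) + ω (ψ (u0, v0))) / 2) * (fderiv ℝ ψ (u0, v0) (0, 1)).1 + g (ψ (u0, v0)) * Real.sin ((ω' (ψ (u0, v0)) - ω (ψ (u0, v0))) / 2) * (fderiv ℝ ψ (u0, v0) (0, 1)).2 = 0 := by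
      linear_combination lam * EX2 - lam * (fderiv ℝ ψ (u0, v0) (0, 1)).1 * (hx1 _ hq) - (fderiv ℝ ψ (u0, v0) (0, 1)).2 * hx2q
    have E4 : lam * lam * Real.sin ((ω' (ψ (u0, v0)) + ω (ψ (u0, v0))) / 2) * (fderiv ℝ ψ (u0, v0) (0, 1)).1 - Real.sin ((ω' (ψ (u0, v0)) - ω (ψ (u0, v0))) / 2) * (fderiv ℝ ψ (u0, v0) (0, 1)).2 = lam * g (ψ (u0, v0)) := by
      linear_combination lam * g (ψ (u0, v0)) * EY2 - lam * (fderiv ℝ ψ (u0, v0) (0, 1)).1 * hy1q - (fderiv ℝ ψ (u0, v0) (0, 1)).2 * hy2q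
    have hK1 : 2 * lam * lam * g (ψ (u0, v0)) * Real.sin ((ω' (ψ (u0, v0)) + ω (ψ (u0, v0))) / 2) * (fderiv ℝ ψ (u0, v0) (1, 0)).1 = lam := by
      linear_combination E1 + g (ψ (u0, v0)) * E2
    have hK2 : 2 * g (ψ (u0, v0)) * Real.sin ((ω' (ψ (u0, v0)) - ω (ψ (u0, v0))) / 2) * (fderiv ℝ ψ (u0, v0) (1, 0)).2 = lam := by
      linear_combination E1 - g (ψ (u0, v0)) * E2
    have hK3 : 2 * lam * lam * g (ψ (u0, v0)) * Real.sin ((ω' (ψ (u0, v0)) + ω (ψ (u0, v0))) / 2) * (fderiv ℝ ψ (u0, v0) (0, 1)).1 = lam * g (ψ (u0, v0)) * g (ψ (u0, v0)) := by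
      linear_combination E3 + g (ψ (u0, v0)) * E4
    have hK4 : 2 * g (ψ (u0, v0)) * Real.sin ((ω' (ψ (u0, v0)) - ω (ψ (u0, v0))) / 2) * (fderiv ℝ ψ (u0, v0) (0, 1)).2 = -(lam * g (ψ (u0, v0)) * g (ψ (u0, v0))) := by
      linear_combination E3 - g (ψ (u0, v0)) * E4
    have hsAne : Real.sin ((ω' (ψ (u0, v0)) + ω (ψ (u0, v0))) / 2) ≠ 0 := by
      intro h; rw [h] at hK1; simp at hK1; exact hlam (by linarith)
    have hsBne : Real.sin ((ω' (ψ (u0, v0)) - ω (ψ (u0, v0))) / 2) ≠ 0 := by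
      intro h; rw [h] at hK2; simp at hK2; exact hlam (by linarith)
    have hP1v : (fderiv ℝ ψ (u0, v0) (1, 0)).1 = 1 / (2 * lam * g (ψ (u0, v0)) * Real.sin ((ω' (ψ (u0, v0)) + ω (ψ (u0, v0))) / 2)) := by
      rw [eq_div_iff (mul_ne_zero (mul_ne_zero (mul_ne_zero two_ne_zero hlam) hGne) hsAne)]
      exact mul_left_cancel₀ hlam (by linear_combination hK1)
    have hP2v : (fderiv ℝ ψ (u0, v0) (1, 0)).2 = lam / (2 * g (ψ (u0, v0)) * Real.sin ((ω' (ψ (u0, v0)) - ω (ψ (u0, v0))) / 2)) := by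
      rw [eq_div_iff (mul_ne_zero (mul_ne_zero two_ne_zero hGne) hsBne)]
      linear_combination hK2
    have hQ1v : (fderiv ℝ ψ (u0, v0) (0, 1)).1 = g (ψ (u0, v0)) / (2 * lam * Real.sin ((ω' (ψ (u0, v0)) + ω (ψ (u0, v0))) / 2)) := by
      rw [eq_div_iff (mul_ne_zero (mul_ne_zero two_ne_zero hlam) hsAne)]
      exact mul_left_cancel₀ (mul_ne_zero hlam hGne) (by linear_combination hK3)
    have hQ2v : (fderiv ℝ ψ (u0, v0) (0, 1)).2 = -(lam * g (ψ (u0, v0))) / (2 * Real.sin ((ω' (ψ (u0, v0)) - ω (ψ (u0, v0))) / 2)) := by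
      rw [eq_div_iff (mul_ne_zero two_ne_zero hsBne)]
      exact mul_left_cancel₀ hGne (by linear_combination hK4)
    -- Backlund relations
    have hrel1 : (pdx ω' (ψ (u0, v0)) - pdx ω (ψ (u0, v0))) / 2 = lam * Real.sin ((ω' (ψ (u0, v0)) + ω (ψ (u0, v0))) / 2) := by
      have hc := ((pdx_hasDerivAt ω' _ hω'd).sub (pdx_hasDerivAt ω _ hωd)).div_const 2
      have h2 : pdx (fun r => (ω' r - ω r) / 2) (ψ (u0, v0))
          = (pdx ω' (ψ (u0, v0)) - pdx ω (ψ (u0, v0))) / 2 := hc.deriv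
      rw [← h2]; exact hB1 _ hq
    have hrel2 : (pdy ω' (ψ (u0, v0)) + pdy ω (ψ (u0, v0))) / 2 = (1 / lam) * Real.sin ((ω' (ψ (u0, v0)) - ω (ψ (u0, v0))) / 2) := by
      have hc := ((pdy_hasDerivAt ω' _ hω'd).add (pdy_hasDerivAt ω _ hωd)).div_const 2
      have h2 : pdy (fun r => (ω' r + ω r) / 2) (ψ (u0, v0))
          = (pdy ω' (ψ (u0, v0)) + pdy ω (ψ (u0, v0))) / 2 := hc.deriv
      rw [← h2]; exact hB2 _ hq
    have hb1' : pdx ω' (ψ (u0, v0)) = pdx ω (ψ (u0, v0)) + 2 * (lam * Real.sin ((ω' (ψ (u0, v0)) + ω (ψ (u0, v0))) / 2)) := by linarith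
    have hb2' : pdy ω' (ψ (u0, v0)) = 2 * ((1 / lam) * Real.sin ((ω' (ψ (u0, v0)) - ω (ψ (u0, v0))) / 2)) - pdy ω (ψ (u0, v0)) := by linarith
    -- trig expansions
    have hsinw : Real.sin (ω (ψ (u0, v0))) = Real.sin ((ω' (ψ (u0, v0)) + ω (ψ (u0, v0))) / 2) * Real.cos ((ω' (ψ (u0, v0)) - ω (ψ (u0, v0))) / 2) - Real.cos ((ω' (ψ (u0, v0)) + ω (ψ (u0, v0))) / 2) * Real.sin ((ω' (ψ (u0, v0)) - ω (ψ (u0, v0))) / 2) := by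
      have h := Real.sin_sub ((ω' (ψ (u0, v0)) + ω (ψ (u0, v0))) / 2) ((ω' (ψ (u0, v0)) - ω (ψ (u0, v0))) / 2)
      rw [show (ω' (ψ (u0, v0)) + ω (ψ (u0, v0))) / 2 - (ω' (ψ (u0, v0)) - ω (ψ (u0, v0))) / 2 = ω (ψ (u0, v0)) by ring] at h
      exact h
    have hcosw : Real.cos (ω (ψ (u0, v0))) = Real.cos ((ω' (ψ (u0, v0)) + ω (ψ (u0, v0))) / 2) * Real.cos ((ω' (ψ (u0, v0)) - ω (ψ (u0, v0))) / 2) + Real.sin ((ω' (ψ (u0, v0)) + ω (ψ (u0, v0))) / 2) * Real.sin ((ω' (ψ (u0, v0)) - ω (ψ (u0, v0))) / 2) := by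
      have h := Real.cos_sub ((ω' (ψ (u0, v0)) + ω (ψ (u0, v0))) / 2) ((ω' (ψ (u0, v0)) - ω (ψ (u0, v0))) / 2)
      rw [show (ω' (ψ (u0, v0)) + ω (ψ (u0, v0))) / 2 - (ω' (ψ (u0, v0)) - ω (ψ (u0, v0))) / 2 = ω (ψ (u0, v0)) by ring] at h
      exact h
    have hsinw' : Real.sin (ω' (ψ (u0, v0))) = Real.sin ((ω' (ψ (u0, v0)) + ω (ψ (u0, v0))) / 2) * Real.cos ((ω' (ψ (u0, v0)) - ω (ψ (u0, v0))) / 2) + Real.cos ((ω' (ψ (u0, v0)) + ω (ψ (u0, v0))) / 2) * Real.sin ((ω' (ψ (u0, v0)) - ω (ψ (u0, v0))) / 2) := by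
      have h := Real.sin_add ((ω' (ψ (u0, v0)) + ω (ψ (u0, v0))) / 2) ((ω' (ψ (u0, v0)) - ω (ψ (u0, v0))) / 2)
      rw [show (ω' (ψ (u0, v0)) + ω (ψ (u0, v0))) / 2 + (ω' (ψ (u0, v0)) - ω (ψ (u0, v0))) / 2 = ω' (ψ (u0, v0)) by ring] at h
      exact h
    have hcosw' : Real.cos (ω' (ψ (u0, v0))) = Real.cos ((ω' (ψ (u0, v0)) + ω (ψ (u0, v0))) / 2) * Real.cos ((ω' (ψ (u0, v0)) - ω (ψ (u0, v0))) / 2) - Real.sin ((ω' (ψ (u0, v0)) + ω (ψ (u0, v0))) / 2) * Real.sin ((ω' (ψ (u0, v0)) - ω (ψ (u0, v0))) / 2) := by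
      have h := Real.cos_add ((ω' (ψ (u0, v0)) + ω (ψ (u0, v0))) / 2) ((ω' (ψ (u0, v0)) - ω (ψ (u0, v0))) / 2)
      rw [show (ω' (ψ (u0, v0)) + ω (ψ (u0, v0))) / 2 + (ω' (ψ (u0, v0)) - ω (ψ (u0, v0))) / 2 = ω' (ψ (u0, v0)) by ring] at h
      exact h
    -- line derivatives of the base functions
    have hwv : HasDerivAt (fun v => ω (ψ (u0, v))) (pdx ω (ψ (u0, v0)) * (fderiv ℝ ψ (u0, v0) (0, 1)).1 + pdy ω (ψ (u0, v0)) * (fderiv ℝ ψ (u0, v0) (0, 1)).2) v0 :=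
      comp_pdy_hasDerivAt ψ ω (u0, v0) hψd hωd
    have hwpv : HasDerivAt (fun v => ω' (ψ (u0, v))) (pdx ω' (ψ (u0, v0)) * (fderiv ℝ ψ (u0, v0) (0, 1)).1 + pdy ω' (ψ (u0, v0)) * (fderiv ℝ ψ (u0, v0) (0, 1)).2) v0 :=
      comp_pdy_hasDerivAt ψ ω' (u0, v0) hψd hω'd
    have hgv : HasDerivAt (fun v => g (ψ (u0, v))) (pdx g (ψ (u0, v0)) * (fderiv ℝ ψ (u0, v0) (0, 1)).1 + pdy g (ψ (u0, v0)) * (fderiv ℝ ψ (u0, v0) (0, 1)).2) v0 :=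
      comp_pdy_hasDerivAt ψ g (u0, v0) hψd hgd
    have hwh : HasDerivAt (fun u => ω (ψ (u, v0))) (pdx ω (ψ (u0, v0)) * (fderiv ℝ ψ (u0, v0) (1, 0)).1 + pdy ω (ψ (u0, v0)) * (fderiv ℝ ψ (u0, v0) (1, 0)).2) u0 :=
      comp_pdx_hasDerivAt ψ ω (u0, v0) hψd hωd
    have hwph : HasDerivAt (fun u => ω' (ψ (u, v0))) (pdx ω' (ψ (u0, v0)) * (fderiv ℝ ψ (u0, v0) (1, 0)).1 + pdy ω' (ψ (u0, v0)) * (fderiv ℝ ψ (u0, v0) (1, 0)).2) u0 :=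
      comp_pdx_hasDerivAt ψ ω' (u0, v0) hψd hω'd
    have hgh : HasDerivAt (fun u => g (ψ (u, v0))) (pdx g (ψ (u0, v0)) * (fderiv ℝ ψ (u0, v0) (1, 0)).1 + pdy g (ψ (u0, v0)) * (fderiv ℝ ψ (u0, v0) (1, 0)).2) u0 :=
      comp_pdx_hasDerivAt ψ g (u0, v0) hψd hgd
    refine ⟨?_, ?_, ?_⟩
    · -- pdy (1/g²) = F2
      have h1fun : (fun s : ℝ × ℝ => 1 / (g (ψ s)) ^ 2)
          = fun s => (g (ψ s) * g (ψ s))⁻¹ := by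
        funext s; rw [one_div, pow_two]
      rw [h1fun]
      simp only [hF2def]
      have hval : pdy (fun s => (g (ψ s) * g (ψ s))⁻¹) (u0, v0)
          = -((pdx g (ψ (u0, v0)) * (fderiv ℝ ψ (u0, v0) (0, 1)).1 + pdy g (ψ (u0, v0)) * (fderiv ℝ ψ (u0, v0) (0, 1)).2) * g (ψ (u0, v0)) + g (ψ (u0, v0)) * (pdx g (ψ (u0, v0)) * (fderiv ℝ ψ (u0, v0) (0, 1)).1 + pdy g (ψ (u0, v0)) * (fderiv ℝ ψ (u0, v0) (0, 1)).2)) / (g (ψ (u0, v0)) * g (ψ (u0, v0))) ^ 2 :=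
        ((hgv.mul hgv).inv (mul_ne_zero hGne hGne)).deriv
      rw [hval, hsinw, hg1 _ hq, hg2 _ hq, hQ1v, hQ2v]
      field_simp
      ring
    · -- pdx (g²) = F3
      have h2fun : (fun s : ℝ × ℝ => (g (ψ s)) ^ 2)
          = fun s => g (ψ s) * g (ψ s) := by
        funext s; rw [pow_two]
      rw [h2fun]
      simp only [hF3def]
      have hval : pdx (fun s => g (ψ s) * g (ψ s)) (u0, v0)
          = (pdx g (ψ (u0, v0)) * (fderiv ℝ ψ (u0, v0) (1, 0)).1 + pdy g (ψ (u0, v0)) * (fderiv ℝ ψ (u0, v0) (1, 0)).2) * g (ψ (u0, v0)) + g (ψ (u0, v0)) * (pdx g (ψ (u0, v0)) * (fderiv ℝ ψ (u0, v0) (1, 0)).1 + pdy g (ψ (u0, v0)) * (fderiv ℝ ψ (u0, v0) (1, 0)).2) :=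
        (hgh.mul hgh).deriv
      rw [hval, hsinw', hg1 _ hq, hg2 _ hq, hP1v, hP2v]
      field_simp
      ring
    · -- the CAE identity
      have hne3 : g (ψ (u0, v0)) * Real.sin ((ω' (ψ (u0, v0)) + ω (ψ (u0, v0))) / 2) * Real.sin ((ω' (ψ (u0, v0)) - ω (ψ (u0, v0))) / 2) ≠ 0 := mul_ne_zero (mul_ne_zero hGne hsAne) hsBne
      have hne4 : Real.sin ((ω' (ψ (u0, v0)) + ω (ψ (u0, v0))) / 2) * Real.sin ((ω' (ψ (u0, v0)) - ω (ψ (u0, v0))) / 2) ≠ 0 := mul_ne_zero hsAne hsBne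
      have hnum : HasDerivAt (fun v => Real.sin (ω (ψ (u0, v))))
          (Real.cos (ω (ψ (u0, v0))) * (pdx ω (ψ (u0, v0)) * (fderiv ℝ ψ (u0, v0) (0, 1)).1 + pdy ω (ψ (u0, v0)) * (fderiv ℝ ψ (u0, v0) (0, 1)).2)) v0 := hwv.sin
      have hAv : HasDerivAt (fun v => Real.sin ((ω' (ψ (u0, v)) + ω (ψ (u0, v))) / 2))
          (Real.cos ((ω' (ψ (u0, v0)) + ω (ψ (u0, v0))) / 2) * (((pdx ω' (ψ (u0, v0)) * (fderiv ℝ ψ (u0, v0) (0, 1)).1 + pdy ω' (ψ (u0, v0)) * (fderiv ℝ ψ (u0, v0) (0, 1)).2) + (pdx ω (ψ (u0, v0)) * (fderiv ℝ ψ (u0, v0) (0, 1)).1 + pdy ω (ψ (u0, v0)) * (fderiv ℝ ψ (u0, v0) (0, 1)).2)) / 2)) v0 := ((hwpv.add hwv).div_const 2).sin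
      have hBv : HasDerivAt (fun v => Real.sin ((ω' (ψ (u0, v)) - ω (ψ (u0, v))) / 2))
          (Real.cos ((ω' (ψ (u0, v0)) - ω (ψ (u0, v0))) / 2) * (((pdx ω' (ψ (u0, v0)) * (fderiv ℝ ψ (u0, v0) (0, 1)).1 + pdy ω' (ψ (u0, v0)) * (fderiv ℝ ψ (u0, v0) (0, 1)).2) - (pdx ω (ψ (u0, v0)) * (fderiv ℝ ψ (u0, v0) (0, 1)).1 + pdy ω (ψ (u0, v0)) * (fderiv ℝ ψ (u0, v0) (0, 1)).2)) / 2)) v0 := ((hwpv.sub hwv).div_const 2).sin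
      have hden := (hgv.mul hAv).mul hBv
      have hfrac := hnum.div hden hne3
      have hpart3a : pdy (fun s => F2 (ψ s)) (u0, v0)
          = (Real.cos (ω (ψ (u0, v0))) * (pdx ω (ψ (u0, v0)) * (fderiv ℝ ψ (u0, v0) (0, 1)).1 + pdy ω (ψ (u0, v0)) * (fderiv ℝ ψ (u0, v0) (0, 1)).2) * (g (ψ (u0, v0)) * Real.sin ((ω' (ψ (u0, v0)) + ω (ψ (u0, v0))) / 2) * Real.sin ((ω' (ψ (u0, v0)) - ω (ψ (u0, v0))) / 2))
             - Real.sin (ω (ψ (u0, v0))) * (((pdx g (ψ (u0, v0)) * (fderiv ℝ ψ (u0, v0) (0, 1)).1 + pdy g (ψ (u0, v0)) * (fderiv ℝ ψ (u0, v0) (0, 1)).2) * Real.sin ((ω' (ψ (u0, v0)) + ω (ψ (u0, v0))) / 2) + g (ψ (u0, v0)) * (Real.cos ((ω' (ψ (u0, v0)) + ω (ψ (u0, v0))) / 2) * (((pdx ω' (ψ (u0, v0)) * (fderiv ℝ ψ (u0, v0) (0, 1)).1 + pdy ω' (ψ (u0, v0)) * (fderiv ℝ ψ (u0, v0) (0,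 1)).2) + (pdx ω (ψ (u0, v0)) * (fderiv ℝ ψ (u0, v0) (0, 1)).1 + pdy ω (ψ (u0, v0)) * (fderiv ℝ ψ (u0, v0) (0, 1)).2)) / 2))) * Real.sin ((ω' (ψ (u0, v0)) - ω (ψ (u0, v0))) / 2)
                 + g (ψ (u0, v0)) * Real.sin ((ω' (ψ (u0, v0)) + ω (ψ (u0, v0))) / 2) * (Real.cos ((ω' (ψ (u0, v0)) - ω (ψ (u0, v0))) / 2) * (((pdx ω' (ψ (u0, v0)) * (fderiv ℝ ψ (u0, v0) (0, 1)).1 + pdy ω' (ψ (u0, v0)) * (fderiv ℝ ψ (u0, v0) (0, 1)).2) - (pdx ω (ψ (u0, v0)) * (fderiv ℝ ψ (u0, v0) (0, 1)).1 + pdy ω (ψ (u0, v0)) * (fderiv ℝ ψ (u0, v0) (0, 1)).2)) / 2))))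
            / (g (ψ (u0, v0)) * Real.sin ((ω' (ψ (u0, v0)) + ω (ψ (u0, v0))) / 2) * Real.sin ((ω' (ψ (u0, v0)) - ω (ψ (u0, v0))) / 2)) ^ 2 := by
        simp only [hF2def]
        exact hfrac.deriv
      have hnum3 : HasDerivAt (fun u => g (ψ (u, v0)) * Real.sin (ω' (ψ (u, v0))))
          ((pdx g (ψ (u0, v0)) * (fderiv ℝ ψ (u0, v0) (1, 0)).1 + pdy g (ψ (u0, v0)) * (fderiv ℝ ψ (u0, v0) (1, 0)).2) * Real.sin (ω' (ψ (u0, v0))) + g (ψ (u0, v0)) * (Real.cos (ω' (ψ (u0, v0))) * (pdx ω' (ψ (u0, v0)) * (fderiv ℝ ψ (u0, v0) (1, 0)).1 + pdy ω' (ψ (u0, v0)) * (fderiv ℝ ψ (u0, v0) (1, 0)).2))) u0 :=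
        hgh.mul hwph.sin
      have hAh : HasDerivAt (fun u => Real.sin ((ω' (ψ (u, v0)) + ω (ψ (u, v0))) / 2))
          (Real.cos ((ω' (ψ (u0, v0)) + ω (ψ (u0, v0))) / 2) * (((pdx ω' (ψ (u0, v0)) * (fderiv ℝ ψ (u0, v0) (1, 0)).1 + pdy ω' (ψ (u0, v0)) * (fderiv ℝ ψ (u0, v0) (1, 0)).2) + (pdx ω (ψ (u0, v0)) * (fderiv ℝ ψ (u0, v0) (1, 0)).1 + pdy ω (ψ (u0, v0)) * (fderiv ℝ ψ (u0, v0) (1, 0)).2)) / 2)) u0 := ((hwph.add hwh).div_const 2).sin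
      have hBh : HasDerivAt (fun u => Real.sin ((ω' (ψ (u, v0)) - ω (ψ (u, v0))) / 2))
          (Real.cos ((ω' (ψ (u0, v0)) - ω (ψ (u0, v0))) / 2) * (((pdx ω' (ψ (u0, v0)) * (fderiv ℝ ψ (u0, v0) (1, 0)).1 + pdy ω' (ψ (u0, v0)) * (fderiv ℝ ψ (u0, v0) (1, 0)).2) - (pdx ω (ψ (u0, v0)) * (fderiv ℝ ψ (u0, v0) (1, 0)).1 + pdy ω (ψ (u0, v0)) * (fderiv ℝ ψ (u0, v0) (1, 0)).2)) / 2)) u0 := ((hwph.sub hwh).div_const 2).sin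
      have hden3 := hAh.mul hBh
      have hfrac3 := hnum3.div hden3 hne4
      have hpart3b : pdx (fun s => F3 (ψ s)) (u0, v0)
          = (((pdx g (ψ (u0, v0)) * (fderiv ℝ ψ (u0, v0) (1, 0)).1 + pdy g (ψ (u0, v0)) * (fderiv ℝ ψ (u0, v0) (1, 0)).2) * Real.sin (ω' (ψ (u0, v0))) + g (ψ (u0, v0)) * (Real.cos (ω' (ψ (u0, v0))) * (pdx ω' (ψ (u0, v0)) * (fderiv ℝ ψ (u0, v0) (1, 0)).1 + pdy ω' (ψ (u0, v0)) * (fderiv ℝ ψ (u0, v0) (1, 0)).2))) * (Real.sin ((ω' (ψ (u0, v0)) + ω (ψ (u0, v0))) / 2) * Real.sin ((ω' (ψ (u0, v0)) - ω (ψ (u0, v0))) / 2))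
             - g (ψ (u0, v0)) * Real.sin (ω' (ψ (u0, v0))) * (Real.cos ((ω' (ψ (u0, v0)) + ω (ψ (u0, v0))) / 2) * (((pdx ω' (ψ (u0, v0)) * (fderiv ℝ ψ (u0, v0) (1, 0)).1 + pdy ω' (ψ (u0, v0)) * (fderiv ℝ ψ (u0, v0) (1, 0)).2) + (pdx ω (ψ (u0, v0)) * (fderiv ℝ ψ (u0, v0) (1, 0)).1 + pdy ω (ψ (u0, v0)) * (fderiv ℝ ψ (u0, v0) (1, 0)).2)) / 2) * Real.sin ((ω' (ψ (u0, v0)) - ω (ψ (u0, v0))) / 2)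
                 + Real.sin ((ω' (ψ (u0, v0)) + ω (ψ (u0, v0))) / 2) * (Real.cos ((ω' (ψ (u0, v0)) - ω (ψ (u0, v0))) / 2) * (((pdx ω' (ψ (u0, v0)) * (fderiv ℝ ψ (u0, v0) (1, 0)).1 + pdy ω' (ψ (u0, v0)) * (fderiv ℝ ψ (u0, v0) (1, 0)).2) - (pdx ω (ψ (u0, v0)) * (fderiv ℝ ψ (u0, v0) (1, 0)).1 + pdy ω (ψ (u0, v0)) * (fderiv ℝ ψ (u0, v0) (1, 0)).2)) / 2))))
            / (Real.sin ((ω' (ψ (u0, v0)) + ω (ψ (u0, v0))) / 2) * Real.sin ((ω' (ψ (u0, v0)) - ω (ψ (u0, v0))) / 2)) ^ 2 := by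
        simp only [hF3def]
        exact hfrac3.deriv
      rw [hpart3a, hpart3b, hsinw, hcosw, hsinw', hcosw', hb1', hb2',
        hg1 _ hq, hg2 _ hq, hP1v, hP2v, hQ1v, hQ2v]
      field_simp
      ring
  rintro p hp
  have t1 : pdy (pdy (fun q => 1 / (g (ψ q)) ^ 2)) p = pdy (fun s => F2 (ψ s)) p :=
    pdy_congr_nhds (Filter.eventuallyEq_of_mem (hV.mem_nhds hp)
      (fun r hr => (main r hr).1))
  have m2 : ∀ r ∈ V, pdx (fun s => 1 / (1 / (g (ψ s)) ^ 2)) r = F3 (ψ r) := by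
    intro r hr
    have he : (fun s => 1 / (1 / (g (ψ s)) ^ 2)) =ᶠ[nhds r] (fun s => (g (ψ s)) ^ 2) :=
      Filter.eventuallyEq_of_mem (hV.mem_nhds hr) (fun s _ => one_div_one_div _)
    rw [pdx_congr_nhds he]
    exact (main r hr).2.1
  have t2 : pdx (pdx (fun q => 1 / (1 / (g (ψ q)) ^ 2))) p = pdx (fun s => F3 (ψ s)) p :=
    pdx_congr_nhds (Filter.eventuallyEq_of_mem (hV.mem_nhds hp) m2)
  rw [t1, t2]
  exact (main p hp).2.2
end
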